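/- arXiv:2502.02803 — 6 statements merged into one kernel-verified Lean document; each statement's English description precedes it below -/
import Mathlib

section
/- Let a ∈ ℂ with |a| ≠ 1. Then ∫_0^1 e^{2πit}/(e^{2πit} + a) dt equals 0 if |a| > 1, and equals 1 if |a| < 1. -/
open Real Complex

theorem integral_indicator_unit_disc (a : ℂ) (ha : ‖a‖ ≠ 1) :
    (‖a‖ > 1 →
      ∫ t in (0:ℝ)..1,
          Complex.exp (2 * π * Complex.I * t) /
            (Complex.exp (2 * π * Complex.I * t) + a) = 0) ∧
    (‖a‖ < 1 →
      ∫ t in (0:ℝ)..1,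
          Complex.exp (2 * π * Complex.I * t) /
            (Complex.exp (2 * π * Complex.I * t) + a) = 1) := by
  have hpi : (2 * π : ℝ) ≠ 0 := by positivity
  have hJ : ∫ t in (0:ℝ)..1,
      Complex.exp (2 * π * Complex.I * t) / (Complex.exp (2 * π * Complex.I * t) + a)
      = (∮ z in C(0, 1), (z + a)⁻¹) / (2 * π * Complex.I) := by
    have hcirc : (∮ z in C(0, 1), (z + a)⁻¹)
        = ∫ θ in (0:ℝ)..2 * π,
            (Complex.exp (θ * Complex.I) * Complex.I) * (Complex.exp (θ * Complex.I) + a)⁻¹ := by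
      simp [circleIntegral, deriv_circleMap, circleMap, smul_eq_mul]
    have hsub : ∫ t in (0:ℝ)..1,
        Complex.exp (2 * π * Complex.I * t) / (Complex.exp (2 * π * Complex.I * t) + a)
        = ∫ t in (0:ℝ)..1,
            (fun θ : ℝ => Complex.exp (θ * Complex.I) / (Complex.exp (θ * Complex.I) + a))
              (2 * π * t) := by
      congr 1
      ext t
      have : (2 * π * Complex.I * t) = ((2 * π * t : ℝ) : ℂ) * Complex.I := by
        push_cast; ring
      simp [this]
    rw [hsub, intervalIntegral.integral_comp_mul_left
      (fun θ : ℝ => Complex.exp (θ * Complex.I) / (Complex.exp (θ * Complex.I) + a)) hpi, hcirc]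
    rw [mul_zero, mul_one]
    rw [intervalIntegral.integral_congr (g := fun θ : ℝ =>
        (Complex.I⁻¹ : ℂ) • ((Complex.exp (θ * Complex.I) * Complex.I) *
          (Complex.exp (θ * Complex.I) + a)⁻¹))]
    · rw [intervalIntegral.integral_smul, Complex.real_smul, smul_eq_mul]
      push_cast
      rw [div_eq_mul_inv]
      rw [mul_inv, mul_inv]
      field_simp
    · intro θ _
      have hI : (Complex.I : ℂ) ≠ 0 := Complex.I_ne_zero
      simp only [smul_eq_mul, div_eq_mul_inv]
      push_cast
      field_simp
  constructor
  · intro hgt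
    have hzero : (∮ z in C(0, 1), (z + a)⁻¹) = 0 := by
      apply circleIntegral_eq_zero_of_differentiable_on_off_countable zero_le_one
        Set.countable_empty
      · apply ContinuousOn.inv₀ (by fun_prop)
        intro z hz
        intro h
        have : z = -a := by linear_combination h
        subst this
        simp only [Metric.mem_closedBall, dist_zero_right] at hz
        rw [norm_neg] at hz
        exact absurd (lt_of_lt_of_le hgt hz) (lt_irrefl 1)
      · intro z hz
        apply DifferentiableAt.inv (by fun_prop)
        intro h
        have : z = -a := by linear_combination h
        subst this
        simp only [Set.diff_empty, Metric.mem_ball, dist_zero_right, norm_neg] at hz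
        exact absurd (hgt.trans hz) (lt_irrefl 1)
    rw [hJ, hzero, zero_div]
  · intro hlt
    have h2 : (∮ z in C(0, 1), (z + a)⁻¹) = 2 * π * Complex.I := by
      have := circleIntegral.integral_sub_inv_of_mem_ball (c := (0:ℂ)) (w := -a) (R := 1)
        (by simpa using hlt)
      simpa [sub_neg_eq_add] using this
    rw [hJ, h2, div_self]
    simp [Real.pi_ne_zero, Complex.I_ne_zero]
end

section
/- Let φ : ℂ × ℂ → ℂ be continuous (on the unit torus, i.e. on the set of pairs (z,w) with |z| = |w| = 1). Then lim_{n→∞} ∫_0^1 φ(e^{2πit}, e^{2πint}) dt = ∫_0^1 ∫_0^1 φ(e^{2πit}, e^{2πis}) dt ds. -/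
open Real Complex Filter MeasureTheory

noncomputable section BLaux

namespace BL

def e (t : ℝ) : ℂ := Complex.exp (2 * π * Complex.I * t)

lemma abs_e (t : ℝ) : ‖e t‖ = 1 := by
  have h : (2 * (π:ℂ) * Complex.I * t) = ((2 * π * t : ℝ) : ℂ) * Complex.I := by
    push_cast; ring
  rw [e, h, Complex.norm_exp_ofReal_mul_I]

lemma continuous_e : Continuous e :=
  Complex.continuous_exp.comp (by fun_prop)

def T : Set (ℂ × ℂ) := {p : ℂ × ℂ | ‖p.1‖ = 1 ∧ ‖p.2‖ = 1}

lemma T_eq : T = Metric.sphere (0:ℂ) 1 ×ˢ Metric.sphere (0:ℂ) 1 := by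
  ext p
  simp [T, Set.mem_prod, Metric.mem_sphere, Complex.dist_eq]

instance : CompactSpace T :=
  isCompact_iff_compactSpace.mp (by rw [T_eq]; exact (isCompact_sphere 0 1).prod (isCompact_sphere 0 1))

def pt (n : ℕ) (t : ℝ) : T := ⟨(e t, e (n * t)), abs_e _, abs_e _⟩

def ptd (s t : ℝ) : T := ⟨(e t, e s), abs_e _, abs_e _⟩

lemma cont_pt (n : ℕ) : Continuous fun t => pt n t :=
  Continuous.subtype_mk (by exact (continuous_e.comp (by fun_prop)).prodMk (continuous_e.comp (by fun_prop))) _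

lemma cont_ptd : Continuous fun p : ℝ × ℝ => ptd p.1 p.2 :=
  Continuous.subtype_mk (by exact (continuous_e.comp (by fun_prop)).prodMk (continuous_e.comp (by fun_prop))) _

def Ln (g : C(T, ℂ)) (n : ℕ) : ℂ := ∫ t in (0:ℝ)..1, g (pt n t)

def L (g : C(T, ℂ)) : ℂ := ∫ s in (0:ℝ)..1, ∫ t in (0:ℝ)..1, g (ptd s t)

lemma intInt (g : C(T, ℂ)) (n : ℕ) :
    IntervalIntegrable (fun t => g (pt n t)) volume 0 1 :=
  (g.continuous.comp (cont_pt n)).intervalIntegrable _ _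

lemma cont_inner (g : C(T, ℂ)) : Continuous fun s => ∫ t in (0:ℝ)..1, g (ptd s t) := by
  apply intervalIntegral.continuous_parametric_intervalIntegral_of_continuous'
  exact g.continuous.comp (cont_ptd.comp (by fun_prop))

lemma cont_ptd_right (s : ℝ) : Continuous fun t => ptd s t :=
  Continuous.subtype_mk (continuous_e.prodMk continuous_const) _

lemma intInt_ptd (g : C(T, ℂ)) (s : ℝ) :
    IntervalIntegrable (fun t => g (ptd s t)) volume 0 1 :=
  (g.continuous.comp (cont_ptd_right s)).intervalIntegrable _ _

lemma intInt_inner (g : C(T, ℂ)) :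
    IntervalIntegrable (fun s => ∫ t in (0:ℝ)..1, g (ptd s t)) volume 0 1 :=
  (cont_inner g).intervalIntegrable _ _


lemma Ln_add (g h : C(T, ℂ)) (n : ℕ) : Ln (g + h) n = Ln g n + Ln h n := by
  unfold Ln
  simp only [ContinuousMap.add_apply]
  exact intervalIntegral.integral_add (intInt g n) (intInt h n)

lemma Ln_sub (g h : C(T, ℂ)) (n : ℕ) : Ln (g - h) n = Ln g n - Ln h n := by
  unfold Ln
  simp only [ContinuousMap.sub_apply]
  exact intervalIntegral.integral_sub (intInt g n) (intInt h n)

lemma Ln_smul (c : ℂ) (g : C(T, ℂ)) (n : ℕ) : Ln (c • g) n = c • Ln g n := by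
  unfold Ln
  simp only [ContinuousMap.smul_apply]
  exact intervalIntegral.integral_smul c _

lemma L_add (g h : C(T, ℂ)) : L (g + h) = L g + L h := by
  unfold L
  have h1 : ∀ s : ℝ, (∫ t in (0:ℝ)..1, (g + h) (ptd s t)) =
      (∫ t in (0:ℝ)..1, g (ptd s t)) + ∫ t in (0:ℝ)..1, h (ptd s t) := by
    intro s
    simp only [ContinuousMap.add_apply]
    exact intervalIntegral.integral_add (intInt_ptd g s) (intInt_ptd h s)
  simp_rw [h1]
  exact intervalIntegral.integral_add (intInt_inner g) (intInt_inner h)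

lemma L_sub (g h : C(T, ℂ)) : L (g - h) = L g - L h := by
  unfold L
  have h1 : ∀ s : ℝ, (∫ t in (0:ℝ)..1, (g - h) (ptd s t)) =
      (∫ t in (0:ℝ)..1, g (ptd s t)) - ∫ t in (0:ℝ)..1, h (ptd s t) := by
    intro s
    simp only [ContinuousMap.sub_apply]
    exact intervalIntegral.integral_sub (intInt_ptd g s) (intInt_ptd h s)
  simp_rw [h1]
  exact intervalIntegral.integral_sub (intInt_inner g) (intInt_inner h)

lemma L_smul (c : ℂ) (g : C(T, ℂ)) : L (c • g) = c • L g := by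
  unfold L
  have h1 : ∀ s : ℝ, (∫ t in (0:ℝ)..1, (c • g) (ptd s t)) =
      c • ∫ t in (0:ℝ)..1, g (ptd s t) := by
    intro s
    simp only [ContinuousMap.smul_apply]
    exact intervalIntegral.integral_smul c _
  simp_rw [h1]
  exact intervalIntegral.integral_smul c _

lemma norm_Ln_le (g : C(T, ℂ)) (n : ℕ) : ‖Ln g n‖ ≤ ‖g‖ := by
  have := intervalIntegral.norm_integral_le_of_norm_le_const
    (a := 0) (b := 1) (C := ‖g‖) (f := fun t => g (pt n t))
    (fun x _ => g.norm_coe_le_norm _)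
  simpa [Ln] using this

lemma norm_L_le (g : C(T, ℂ)) : ‖L g‖ ≤ ‖g‖ := by
  have := intervalIntegral.norm_integral_le_of_norm_le_const
    (a := 0) (b := 1) (C := ‖g‖) (f := fun s => ∫ t in (0:ℝ)..1, g (ptd s t))
    (fun x _ => by
      have := intervalIntegral.norm_integral_le_of_norm_le_const
        (a := 0) (b := 1) (C := ‖g‖) (f := fun t => g (ptd x t))
        (fun t _ => g.norm_coe_le_norm _)
      simpa using this)
  simpa [L] using this

def V : Set C(T, ℂ) := {g | Tendsto (fun n => Ln g n) atTop (nhds (L g))}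

lemma V_zero : (0 : C(T, ℂ)) ∈ V := by
  have hLn : ∀ n, Ln (0 : C(T, ℂ)) n = 0 := by intro n; simp [Ln]
  have hL : L (0 : C(T, ℂ)) = 0 := by simp [L]
  simpa [V, hL, funext hLn] using (tendsto_const_nhds : Tendsto (fun _ : ℕ => (0:ℂ)) atTop _)

lemma V_add {g h : C(T, ℂ)} (hg : g ∈ V) (hh : h ∈ V) : g + h ∈ V := by
  have := hg.add hh
  simpa [V, Ln_add, L_add] using this

lemma V_smul (c : ℂ) {g : C(T, ℂ)} (hg : g ∈ V) : c • g ∈ V := by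
  have := hg.const_smul c
  simpa [V, Ln_smul, L_smul] using this

lemma V_closed : IsClosed V := by
  refine isClosed_of_closure_subset ?_
  intro g hg
  rw [V, Set.mem_setOf_eq, Metric.tendsto_atTop]
  intro ε hε
  obtain ⟨h, hhV, hdist⟩ := Metric.mem_closure_iff.mp hg (ε/3) (by linarith)
  have hnorm : ‖g - h‖ < ε/3 := by rwa [← dist_eq_norm]
  obtain ⟨N, hN⟩ := Metric.tendsto_atTop.mp hhV (ε/3) (by linarith)
  refine ⟨N, fun n hn => ?_⟩
  have e1 : ‖Ln g n - Ln h n‖ ≤ ‖g - h‖ := by rw [← Ln_sub]; exact norm_Ln_le _ _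
  have e2 : ‖L g - L h‖ ≤ ‖g - h‖ := by rw [← L_sub]; exact norm_L_le _
  have e3 := hN n hn
  rw [dist_eq_norm] at e3 ⊢
  calc ‖Ln g n - L g‖
      = ‖(Ln g n - Ln h n) + (Ln h n - L h) + (L h - L g)‖ := by ring_nf
    _ ≤ ‖Ln g n - Ln h n‖ + ‖Ln h n - L h‖ + ‖L h - L g‖ := norm_add₃_le
    _ < ε/3 + ε/3 + ε/3 := by
        refine add_lt_add (add_lt_add_of_lt_of_lt ?_ e3) ?_
        · exact lt_of_le_of_lt e1 hnorm
        · rw [norm_sub_rev]; exact lt_of_le_of_lt e2 hnorm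
    _ = ε := by ring


def mono (a b c d : ℕ) : C(T, ℂ) :=
  ⟨fun p => (p : ℂ × ℂ).1 ^ a * (starRingEnd ℂ) (p : ℂ × ℂ).1 ^ b *
      (p : ℂ × ℂ).2 ^ c * (starRingEnd ℂ) (p : ℂ × ℂ).2 ^ d, by
    have h1 : Continuous fun p : T => (p : ℂ × ℂ).1 := continuous_fst.comp continuous_subtype_val
    have h2 : Continuous fun p : T => (p : ℂ × ℂ).2 := continuous_snd.comp continuous_subtype_val
    have hc : Continuous (starRingEnd ℂ) := Complex.continuous_conj
    exact (((h1.pow a).mul ((hc.comp h1).pow b)).mul (h2.pow c)).mul ((hc.comp h2).pow d)⟩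

def S : Set C(T, ℂ) := {g | ∃ a b c d : ℕ, g = mono a b c d}

lemma mono_mul (a b c d a' b' c' d' : ℕ) :
    mono a b c d * mono a' b' c' d' = mono (a+a') (b+b') (c+c') (d+d') := by
  ext p
  simp only [mono, ContinuousMap.mul_apply, ContinuousMap.coe_mk, pow_add]
  ring

lemma mono_star (a b c d : ℕ) : star (mono a b c d) = mono b a d c := by
  ext p
  simp only [mono, ContinuousMap.star_apply, ContinuousMap.coe_mk]
  simp only [star_def, map_mul, map_pow, Complex.conj_conj]
  ring

lemma one_mem_S : (1 : C(T, ℂ)) ∈ S := ⟨0, 0, 0, 0, by ext p; simp [mono]⟩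

def W : Submodule ℂ C(T, ℂ) := Submodule.span ℂ S

lemma W_mul {x y : C(T, ℂ)} (hx : x ∈ W) (hy : y ∈ W) : x * y ∈ W := by
  have hle : W * W ≤ W := by
    rw [W, Submodule.span_mul_span]
    apply Submodule.span_mono
    rintro z ⟨u, hu, v, hv, rfl⟩
    obtain ⟨a, b, c, d, rfl⟩ := hu
    obtain ⟨a', b', c', d', rfl⟩ := hv
    exact ⟨_, _, _, _, mono_mul a b c d a' b' c' d'⟩
  exact hle (Submodule.mul_mem_mul hx hy)

lemma W_star {x : C(T, ℂ)} (hx : x ∈ W) : star x ∈ W := by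
  induction hx using Submodule.span_induction with
  | mem u hu =>
    obtain ⟨a, b, c, d, rfl⟩ := hu
    rw [mono_star]
    exact Submodule.subset_span ⟨_, _, _, _, rfl⟩
  | zero => simpa using W.zero_mem
  | add u v _ _ hu hv => rw [star_add]; exact W.add_mem hu hv
  | smul c u _ hu => rw [star_smul]; exact W.smul_mem _ hu

def A : StarSubalgebra ℂ C(T, ℂ) := StarAlgebra.adjoin ℂ {mono 1 0 0 0, mono 0 0 1 0}

lemma A_sep : A.SeparatesPoints := by
  intro x y hxy
  have hv : (x : ℂ × ℂ) ≠ (y : ℂ × ℂ) := fun h => hxy (Subtype.ext h)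
  rcases not_and_or.mp (fun hh : (x : ℂ × ℂ).1 = (y : ℂ × ℂ).1 ∧ (x : ℂ × ℂ).2 = (y : ℂ × ℂ).2 => hv (Prod.ext hh.1 hh.2)) with h1 | h2
  · refine ⟨_, ⟨mono 1 0 0 0, StarAlgebra.subset_adjoin ℂ _ (Or.inl rfl), rfl⟩, ?_⟩
    simpa [mono] using h1
  · refine ⟨_, ⟨mono 0 0 1 0, StarAlgebra.subset_adjoin ℂ _ (Or.inr rfl), rfl⟩, ?_⟩
    simpa [mono] using h2

lemma A_le_W {x : C(T, ℂ)} (hx : x ∈ A) : x ∈ W := by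
  induction hx using StarAlgebra.adjoin_induction with
  | mem u hu =>
    rcases hu with h | h
    · exact Submodule.subset_span ⟨1, 0, 0, 0, h⟩
    · exact Submodule.subset_span ⟨0, 0, 1, 0, h⟩
  | algebraMap r =>
    have : (algebraMap ℂ C(T, ℂ)) r = r • (1 : C(T, ℂ)) := by
      rw [Algebra.algebraMap_eq_smul_one]
    rw [this]
    exact W.smul_mem _ (Submodule.subset_span one_mem_S)
  | add u v _ _ hu hv => exact W.add_mem hu hv
  | mul u v _ _ hu hv => exact W_mul hu hv
  | star u _ hu => exact W_star hu


lemma e_pow (u : ℝ) (m : ℕ) : e u ^ m = Complex.exp (2 * π * Complex.I * ((m : ℂ) * u)) := by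
  rw [e, ← Complex.exp_nat_mul]
  congr 1
  push_cast
  ring

lemma e_conj_pow (u : ℝ) (m : ℕ) :
    (starRingEnd ℂ) (e u) ^ m = Complex.exp (2 * π * Complex.I * (-(m : ℂ) * u)) := by
  rw [e, ← Complex.exp_conj, ← Complex.exp_nat_mul]
  congr 1
  have hc : (starRingEnd ℂ) (2 * ↑π * Complex.I * ↑u) = -(2 * ↑π * Complex.I * ↑u) := by
    simp only [map_mul, Complex.conj_I, Complex.conj_ofReal, map_ofNat]
    ring
  rw [hc]
  ring

lemma mono_pt (a b c d : ℕ) (n : ℕ) (t : ℝ) :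
    (mono a b c d) (pt n t) =
      Complex.exp (2 * π * Complex.I *
        ((((a : ℤ) - b + n * ((c : ℤ) - d) : ℤ) : ℂ) * t)) := by
  simp only [mono, ContinuousMap.coe_mk, pt]
  rw [e_pow, e_conj_pow, e_pow, e_conj_pow, ← Complex.exp_add, ← Complex.exp_add,
    ← Complex.exp_add]
  congr 1
  push_cast
  ring

lemma mono_ptd (a b c d : ℕ) (s t : ℝ) :
    (mono a b c d) (ptd s t) =
      Complex.exp (2 * π * Complex.I * ((((a : ℤ) - b : ℤ) : ℂ) * t)) *
      Complex.exp (2 * π * Complex.I * ((((c : ℤ) - d : ℤ) : ℂ) * s)) := by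
  simp only [mono, ContinuousMap.coe_mk, ptd]
  rw [e_pow, e_conj_pow, e_pow, e_conj_pow, ← Complex.exp_add, ← Complex.exp_add,
    ← Complex.exp_add, ← Complex.exp_add]
  congr 1
  push_cast
  ring

lemma char_int (M : ℤ) :
    (∫ t in (0:ℝ)..1, Complex.exp (2 * π * Complex.I * ((M : ℂ) * t))) =
      if M = 0 then 1 else 0 := by
  rcases eq_or_ne M 0 with h | h
  · simp [h]
  · have hπ : ((π : ℂ)) ≠ 0 := Complex.ofReal_ne_zero.mpr Real.pi_ne_zero
    have hM : ((M : ℂ)) ≠ 0 := Int.cast_ne_zero.mpr h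
    have hc : (2 * (π : ℂ) * Complex.I * M) ≠ 0 :=
      mul_ne_zero (mul_ne_zero (mul_ne_zero two_ne_zero hπ) Complex.I_ne_zero) hM
    have heq : ∀ t : ℝ, 2 * (π : ℂ) * Complex.I * ((M : ℂ) * t) =
        (2 * π * Complex.I * M) * t := by intro t; ring
    simp_rw [heq]
    rw [if_neg h, integral_exp_mul_complex hc]
    have h1 : Complex.exp (2 * (π : ℂ) * Complex.I * M * (1 : ℝ)) = 1 := by
      rw [show (2 * (π : ℂ) * Complex.I * M * ((1 : ℝ) : ℂ)) = M * (2 * π * Complex.I) by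
        push_cast; ring]
      exact Complex.exp_int_mul_two_pi_mul_I M
    rw [h1]
    simp

lemma Ln_mono (a b c d : ℕ) (n : ℕ) :
    Ln (mono a b c d) n = if ((a : ℤ) - b + n * ((c : ℤ) - d)) = 0 then 1 else 0 := by
  unfold Ln
  simp_rw [mono_pt]
  exact char_int _

lemma L_mono (a b c d : ℕ) :
    L (mono a b c d) =
      (if ((a : ℤ) - b) = 0 then 1 else 0) * (if ((c : ℤ) - d) = 0 then 1 else 0) := by
  unfold L
  simp_rw [mono_ptd, intervalIntegral.integral_mul_const, char_int,
    intervalIntegral.integral_const_mul, char_int]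

lemma S_sub_V : S ⊆ V := by
  rintro g ⟨a, b, c, d, rfl⟩
  set j : ℤ := (a : ℤ) - b with hj
  set k : ℤ := (c : ℤ) - d with hk
  rcases eq_or_ne k 0 with hk0 | hk0
  · have hfun : (fun n => Ln (mono a b c d) n) = fun _ => (if j = 0 then 1 else 0) := by
      funext n
      rw [Ln_mono, ← hj, ← hk, hk0]
      simp
    have hL : L (mono a b c d) = if j = 0 then 1 else 0 := by
      rw [L_mono, ← hj, ← hk, hk0]
      simp
    rw [V, Set.mem_setOf_eq, hfun, hL]
    exact tendsto_const_nhds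
  · have hL : L (mono a b c d) = 0 := by
      rw [L_mono, ← hj, ← hk, if_neg hk0, mul_zero]
    rw [V, Set.mem_setOf_eq, hL]
    apply Tendsto.congr' _ (tendsto_const_nhds (x := (0:ℂ)))
    filter_upwards [eventually_ge_atTop (j.natAbs + 1)] with n hn
    rw [Ln_mono, ← hj, ← hk, if_neg]
    intro h0
    have h1 : j = -((n : ℤ) * k) := by linarith
    have h2 : |j| = (n : ℤ) * |k| := by
      rw [h1, abs_neg, abs_mul, abs_of_nonneg (by positivity : (0:ℤ) ≤ (n:ℤ))]
    have h3 : 1 ≤ |k| := Int.one_le_abs hk0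
    have h4 : (j.natAbs : ℤ) + 1 ≤ (n : ℤ) := by exact_mod_cast hn
    have h5 : |j| = (j.natAbs : ℤ) := Int.abs_eq_natAbs j
    nlinarith


lemma W_sub_V : (W : Set C(T, ℂ)) ⊆ V := by
  intro x hx
  induction hx using Submodule.span_induction with
  | mem u hu => exact S_sub_V hu
  | zero => exact V_zero
  | add u v _ _ hu hv => exact V_add hu hv
  | smul c u _ hu => exact V_smul c hu

lemma V_univ (g : C(T, ℂ)) : g ∈ V := by
  have hA : A.topologicalClosure = ⊤ :=
    ContinuousMap.starSubalgebra_topologicalClosure_eq_top_of_separatesPoints A A_sep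
  have hg : g ∈ closure (A : Set C(T, ℂ)) := by
    have h1 : g ∈ A.topologicalClosure := by rw [hA]; trivial
    exact h1
  have hAV : (A : Set C(T, ℂ)) ⊆ V := fun x hx => W_sub_V (A_le_W hx)
  have := closure_mono hAV hg
  rwa [V_closed.closure_eq] at this

end BL

end BLaux

theorem boyd_lawton_lemma_two_vars
    (φ : ℂ × ℂ → ℂ)
    (hφ : ContinuousOn φ {p : ℂ × ℂ | ‖p.1‖ = 1 ∧ ‖p.2‖ = 1}) :
    Tendsto
      (fun n : ℕ => ∫ t in (0:ℝ)..1,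
        φ (Complex.exp (2 * π * Complex.I * t),
           Complex.exp (2 * π * Complex.I * (n * t))))
      atTop
      (nhds (∫ s in (0:ℝ)..1, ∫ t in (0:ℝ)..1,
        φ (Complex.exp (2 * π * Complex.I * t),
           Complex.exp (2 * π * Complex.I * s)))) := by
  have hrestr : Continuous (BL.T.restrict φ) := ContinuousOn.restrict hφ
  set g : C(BL.T, ℂ) := ⟨BL.T.restrict φ, hrestr⟩ with hgdef
  have hmain := BL.V_univ g
  rw [BL.V, Set.mem_setOf_eq] at hmain
  have hcast : ∀ (n : ℕ) (t : ℝ), BL.e ((n : ℝ) * t) =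
      Complex.exp (2 * π * Complex.I * ((n : ℂ) * (t : ℂ))) := by
    intro n t
    rw [BL.e]
    congr 1
    push_cast
    ring
  have h1 : (fun n : ℕ => BL.Ln g n) = fun n : ℕ => ∫ t in (0:ℝ)..1,
      φ (Complex.exp (2 * π * Complex.I * t),
         Complex.exp (2 * π * Complex.I * (n * t))) := by
    funext n
    unfold BL.Ln
    congr 1
    funext t
    show φ (BL.e t, BL.e ((n : ℝ) * t)) = _
    rw [hcast n t, BL.e]
  have h2 : BL.L g = ∫ s in (0:ℝ)..1, ∫ t in (0:ℝ)..1,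
      φ (Complex.exp (2 * π * Complex.I * t),
         Complex.exp (2 * π * Complex.I * s)) := by
    unfold BL.L
    rfl
  rw [h1, h2] at hmain
  exact hmain
end

section
/- Let P(x,y) = a_g(x)·y^g + a_{g−1}(x)·y^{g−1} + ⋯ + a_0(x) be a polynomial in two variables with complex coefficients, with a_g ≠ 0 and g ≥ 1, which does not vanish at any point (z,w) with |z| = |w| = 1. Then lim_{n→∞} c(P(x,x^n)) = (1/g) ∫_0^1 ∫_0^1 (∂P/∂y)(e^{2πit}, e^{2πis})·e^{2πis} / P(e^{2πit}, e^{2πis}) dt ds, where for each sufficiently large n, P(x,x^n) is the univariate polynomial obtained by substituting y = x^n (its degree is deg(a_g) + n·g). -/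
open Polynomial Real Complex Filter MeasureTheory

noncomputable def ee (t : ℝ) : ℂ := Complex.exp (2 * π * Complex.I * t)

noncomputable def tev (Q : Polynomial (Polynomial ℂ)) (z w : ℂ) : ℂ :=
  Polynomial.eval₂ (Polynomial.evalRingHom z) w Q

noncomputable def Pd (P : Polynomial (Polynomial ℂ)) : Polynomial (Polynomial ℂ) :=
  P.sum fun i a => Polynomial.monomial i (Polynomial.derivative a)

lemma ee_abs (t : ℝ) : ‖(ee t)‖ = 1 := by
  have h : ee t = Complex.exp (((2 * π * t : ℝ) : ℂ) * Complex.I) := by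
    unfold ee; push_cast; ring_nf
  rw [h]; exact Complex.norm_exp_ofReal_mul_I _

lemma ee_ne_zero (t : ℝ) : ee t ≠ 0 := by
  exact Complex.exp_ne_zero _

lemma ee_add_one (t : ℝ) : ee (t + 1) = ee t := by
  unfold ee
  push_cast
  rw [mul_add, Complex.exp_add, mul_one, Complex.exp_two_pi_mul_I, mul_one]

lemma ee_add_nat (t : ℝ) (j : ℕ) : ee (t + j) = ee t := by
  induction j with
  | zero => simp
  | succ k ih =>
      have : (t + (k + 1 : ℕ) : ℝ) = (t + k) + 1 := by push_cast; ring
      rw [this, ee_add_one, ih]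

lemma ee_nat_mul (n : ℕ) (t : ℝ) : ee (n * t) = (ee t) ^ n := by
  unfold ee
  rw [← Complex.exp_nat_mul]
  congr 1
  push_cast
  ring

lemma ee_continuous : Continuous ee := by
  unfold ee
  exact Complex.continuous_exp.comp (by continuity)

lemma tev_continuous (Q : Polynomial (Polynomial ℂ)) :
    Continuous fun p : ℂ × ℂ => tev Q p.1 p.2 := by
  have h : (fun p : ℂ × ℂ => tev Q p.1 p.2) =
      fun p : ℂ × ℂ => ∑ i ∈ Finset.range (Q.natDegree + 1),
        (Q.coeff i).eval p.1 * p.2 ^ i := by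
    funext p
    rw [tev, Polynomial.eval₂_eq_sum_range]
    rfl
  rw [h]
  refine continuous_finset_sum _ fun i _ => Continuous.mul ?_ (continuous_snd.pow i)
  exact (Polynomial.continuous (Q.coeff i)).comp continuous_fst

lemma eval_eval_pow (Q : Polynomial (Polynomial ℂ)) (x : ℂ) (n : ℕ) :
    Polynomial.eval x (Q.eval (Polynomial.X ^ n : Polynomial ℂ)) = tev Q x (x ^ n) := by
  have h1 : Q.eval (Polynomial.X ^ n : Polynomial ℂ) =
      Polynomial.eval₂ (RingHom.id (Polynomial ℂ)) (Polynomial.X ^ n) Q := by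
    rfl
  rw [h1, tev]
  have h2 := Polynomial.hom_eval₂ Q (RingHom.id (Polynomial ℂ))
    (Polynomial.evalRingHom x) (Polynomial.X ^ n)
  simpa using h2

lemma Pd_add (p q : Polynomial (Polynomial ℂ)) : Pd (p + q) = Pd p + Pd q := by
  unfold Pd
  rw [Polynomial.sum_add_index]
  · intro i; simp
  · intro i b c; rw [Polynomial.derivative_add, map_add]

lemma Pd_monomial (i : ℕ) (a : Polynomial ℂ) :
    Pd (Polynomial.monomial i a) = Polynomial.monomial i (Polynomial.derivative a) := by
  unfold Pd
  rw [Polynomial.sum_monomial_index]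
  simp

lemma deriv_eval_pow (P : Polynomial (Polynomial ℂ)) (n : ℕ) (hn : 1 ≤ n) :
    Polynomial.derivative (P.eval (Polynomial.X ^ n : Polynomial ℂ)) =
      (Pd P).eval (Polynomial.X ^ n : Polynomial ℂ) +
        Polynomial.C ((n : ℂ)) * Polynomial.X ^ (n - 1) *
          (Polynomial.derivative P).eval (Polynomial.X ^ n : Polynomial ℂ) := by
  induction P using Polynomial.induction_on' with
  | add p q hp hq =>
      rw [Polynomial.eval_add, Polynomial.derivative_add, hp, hq, Pd_add, Polynomial.eval_add,
        Polynomial.derivative_add, Polynomial.eval_add]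
      ring
  | monomial i a =>
      rw [Pd_monomial]
      rcases Nat.eq_zero_or_pos i with hi | hi
      · subst hi
        simp [Polynomial.eval_monomial, Polynomial.derivative_monomial]
      · have hni : n * (i - 1) + (n - 1) = n * i - 1 := by
          rcases Nat.exists_eq_add_of_le hi with ⟨j, rfl⟩
          simp only [Nat.add_sub_cancel_left, Nat.mul_add, Nat.mul_one]
          omega
        rw [Polynomial.eval_monomial, Polynomial.eval_monomial, Polynomial.derivative_monomial,
          Polynomial.eval_monomial]
        rw [← pow_mul, ← pow_mul, Polynomial.derivative_mul,
          Polynomial.derivative_X_pow]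
        rw [← hni, pow_add]
        push_cast [map_mul]
        ring_nf
        simp [Polynomial.C_eq_natCast]

lemma natDeg_eval_pow (P : Polynomial (Polynomial ℂ)) (hP : P ≠ 0) (hg : 1 ≤ P.natDegree)
    (n : ℕ) (hn : (Finset.range (P.natDegree + 1)).sup (fun i => (P.coeff i).natDegree) < n) :
    (P.eval (Polynomial.X ^ n : Polynomial ℂ)).natDegree =
      P.leadingCoeff.natDegree + n * P.natDegree := by
  classical
  set g := P.natDegree with hgdef
  have hg1 : 1 ≤ g := hg
  have hlc : P.leadingCoeff ≠ 0 := Polynomial.leadingCoeff_ne_zero.mpr hP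
  have h0 : P.eval (Polynomial.X ^ n : Polynomial ℂ) =
      (∑ i ∈ Finset.range g, P.coeff i * (Polynomial.X ^ n) ^ i) +
        P.leadingCoeff * (Polynomial.X ^ n) ^ g := by
    rw [Polynomial.eval_eq_sum_range, Finset.sum_range_succ]
    rfl
  have htop : (P.leadingCoeff * (Polynomial.X ^ n : Polynomial ℂ) ^ g).natDegree =
      P.leadingCoeff.natDegree + n * g := by
    rw [← pow_mul, Polynomial.natDegree_mul hlc (pow_ne_zero _ Polynomial.X_ne_zero),
      Polynomial.natDegree_X_pow]
  set D := (Finset.range (g + 1)).sup (fun i => (P.coeff i).natDegree) with hD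
  have hrest : (∑ i ∈ Finset.range g, P.coeff i * (Polynomial.X ^ n : Polynomial ℂ) ^ i).natDegree
      < P.leadingCoeff.natDegree + n * g := by
    obtain ⟨g', hg'⟩ : ∃ g', g = g' + 1 := ⟨g - 1, by omega⟩
    have hb : ∀ i ∈ Finset.range g,
        (P.coeff i * (Polynomial.X ^ n : Polynomial ℂ) ^ i).natDegree ≤ D + n * g' := by
      intro i hi
      refine le_trans (Polynomial.natDegree_mul_le) ?_
      rw [← pow_mul, Polynomial.natDegree_X_pow]
      have hig : i < g := Finset.mem_range.mp hi
      have h1 : (P.coeff i).natDegree ≤ D := by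
        rw [hD]
        exact Finset.le_sup (f := fun j => (P.coeff j).natDegree)
          (Finset.mem_range.mpr (by omega))
      have h2 : n * i ≤ n * g' := by
        have := Finset.mem_range.mp hi
        exact Nat.mul_le_mul_left n (by omega)
      omega
    have hng : n * g = n * g' + n := by rw [hg']; ring
    have hDn : D < n := by simpa [hD] using hn
    have hlt : D + n * g' < P.leadingCoeff.natDegree + n * g := by rw [hng]; omega
    exact lt_of_le_of_lt (Polynomial.natDegree_sum_le_of_forall_le _ _ hb) hlt
  rw [h0, Polynomial.natDegree_add_eq_right_of_natDegree_lt (by rw [htop]; exact hrest), htop]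

lemma prod_logderiv (s : Multiset ℂ) (x : ℂ) (hx : ∀ r ∈ s, x - r ≠ 0) :
    (Polynomial.derivative ((s.map fun r => Polynomial.X - Polynomial.C r).prod)).eval x =
      ((s.map fun r => Polynomial.X - Polynomial.C r).prod).eval x *
        (s.map fun r => (x - r)⁻¹).sum := by
  revert hx
  refine Multiset.induction_on s ?_ ?_
  · intro _; simp
  · intro r s ih hx
    have hr : x - r ≠ 0 := hx r (Multiset.mem_cons_self r s)
    have hs' : ∀ a ∈ s, x - a ≠ 0 := fun a ha => hx a (Multiset.mem_cons_of_mem ha)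
    simp only [Multiset.map_cons, Multiset.prod_cons, Multiset.sum_cons]
    rw [Polynomial.derivative_mul]
    simp only [Polynomial.derivative_sub, Polynomial.derivative_X, Polynomial.derivative_C,
      sub_zero]
    rw [Polynomial.eval_add, Polynomial.eval_mul, Polynomial.eval_mul, ih hs']
    simp only [Polynomial.eval_one, Polynomial.eval_sub, Polynomial.eval_X, Polynomial.eval_C,
      one_mul]
    simp only [Polynomial.eval_mul, Polynomial.eval_sub, Polynomial.eval_X, Polynomial.eval_C]
    linear_combination (-(Polynomial.eval x (Multiset.map (fun r => Polynomial.X - Polynomial.C r) s).prod)) * mul_inv_cancel₀ hr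

lemma logderiv_eval (Q : Polynomial ℂ) (x : ℂ) (hx : Q.eval x ≠ 0) :
    (Polynomial.derivative Q).eval x = Q.eval x * ((Q.roots.map fun r => (x - r)⁻¹).sum) := by
  have hQ0 : Q ≠ 0 := by
    intro h; exact hx (by simp [h])
  have hsplit : Q.roots.card = Q.natDegree :=
    (Polynomial.splits_iff_card_roots).mp (IsAlgClosed.splits Q)
  have hfac := Polynomial.C_leadingCoeff_mul_prod_multiset_X_sub_C hsplit
  have hroots : ∀ r ∈ Q.roots, x - r ≠ 0 := by
    intro r hrt h
    have hxr : x = r := sub_eq_zero.mp h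
    have hz : Q.eval r = 0 := (Polynomial.mem_roots hQ0).mp hrt
    exact hx (by rw [hxr]; exact hz)
  have hQx : Q.eval x = (Polynomial.C Q.leadingCoeff).eval x *
      ((Q.roots.map fun r => Polynomial.X - Polynomial.C r).prod).eval x := by
    conv_lhs => rw [← hfac]
    rw [Polynomial.eval_mul]
  conv_lhs => rw [← hfac]
  rw [Polynomial.derivative_C_mul, Polynomial.eval_mul,
    prod_logderiv Q.roots x hroots, hQx]
  ring

lemma winding (r : ℂ) (hr : ‖r‖ ≠ 1) :
    ∫ t in (0:ℝ)..1, ee t * (ee t - r)⁻¹ = if ‖r‖ < 1 then 1 else 0 := by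
  have hcirc : (∮ z in C(0, 1), (z - r)⁻¹) = if ‖r‖ < 1 then 2 * π * Complex.I else 0 := by
    split_ifs with h
    · exact circleIntegral.integral_sub_inv_of_mem_ball
        (by simpa [Metric.mem_ball, Complex.dist_eq] using h)
    · have h1 : 1 < ‖r‖ := lt_of_le_of_ne (not_lt.mp h) (Ne.symm hr)
      refine Complex.circleIntegral_eq_zero_of_differentiable_on_off_countable
        (by norm_num) Set.countable_empty ?_ ?_
      · refine ContinuousOn.inv₀ (Continuous.continuousOn (by continuity)) ?_
        intro z hz
        refine sub_ne_zero.mpr fun hzr => ?_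
        rw [Metric.mem_closedBall, Complex.dist_eq, sub_zero] at hz
        rw [hzr] at hz
        exact absurd (lt_of_lt_of_le h1 hz) (lt_irrefl _)
      · intro z hz
        refine DifferentiableAt.inv (by fun_prop) ?_
        refine sub_ne_zero.mpr fun hzr => ?_
        have hz' := hz.1
        rw [Metric.mem_ball, Complex.dist_eq, sub_zero] at hz'
        rw [hzr] at hz'
        exact absurd (lt_trans h1 hz') (lt_irrefl _)
  have hmap : ∀ t : ℝ, circleMap 0 1 (2 * π * t) = ee t := by
    intro t
    rw [circleMap_zero]
    unfold ee
    push_cast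
    ring_nf
  have h2 : ∫ t in (0:ℝ)..1, ee t * (ee t - r)⁻¹
      = (2 * π)⁻¹ • ∫ θ in (0:ℝ)..(2 * π), circleMap 0 1 θ * (circleMap 0 1 θ - r)⁻¹ := by
    have := intervalIntegral.integral_comp_mul_left
      (a := (0:ℝ)) (b := 1) (fun θ : ℝ => circleMap 0 1 θ * (circleMap 0 1 θ - r)⁻¹)
      (by positivity : (2 * π : ℝ) ≠ 0)
    rw [mul_zero, mul_one] at this
    rw [← this]
    refine intervalIntegral.integral_congr fun t _ => ?_
    rw [← hmap t]
  have h3 : (∮ z in C(0, 1), (z - r)⁻¹)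
      = Complex.I * ∫ θ in (0:ℝ)..(2 * π), circleMap 0 1 θ * (circleMap 0 1 θ - r)⁻¹ := by
    rw [circleIntegral, ← intervalIntegral.integral_const_mul]
    refine intervalIntegral.integral_congr fun θ _ => ?_
    rw [deriv_circleMap]
    simp only [smul_eq_mul]
    ring
  have hI : (∫ θ in (0:ℝ)..(2 * π), circleMap 0 1 θ * (circleMap 0 1 θ - r)⁻¹)
      = Complex.I⁻¹ * ∮ z in C(0, 1), (z - r)⁻¹ := by
    rw [h3, ← mul_assoc, inv_mul_cancel₀ Complex.I_ne_zero, one_mul]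
  rw [h2, hI, hcirc]
  split_ifs with h
  · rw [Complex.real_smul]
    have h4 : Complex.I⁻¹ * (2 * (π : ℂ) * Complex.I) = ((2 * π : ℝ) : ℂ) := by
      rw [Complex.inv_I]
      push_cast
      ring_nf
      rw [Complex.I_sq]
      ring
    rw [h4, Complex.ofReal_inv,
      inv_mul_cancel₀ (Complex.ofReal_ne_zero.mpr (by positivity : (2 * π : ℝ) ≠ 0))]
  · simp

lemma cont_single (r : ℂ) (hr : ‖r‖ ≠ 1) :
    Continuous fun t : ℝ => ee t * (ee t - r)⁻¹ := by
  refine Continuous.mul ee_continuous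
    (Continuous.inv₀ (ee_continuous.sub continuous_const) ?_)
  intro t
  refine sub_ne_zero.mpr fun h => hr ?_
  rw [← h, ee_abs]

lemma contMS (s : Multiset ℂ) (hs : ∀ r ∈ s, ‖r‖ ≠ 1) :
    Continuous fun t : ℝ => ((s.map fun r => ee t * (ee t - r)⁻¹).sum) := by
  revert hs
  refine Multiset.induction_on s ?_ ?_
  · intro _; simpa using continuous_const
  · intro r s ih hs
    have hr := hs r (Multiset.mem_cons_self r s)
    have hs' : ∀ a ∈ s, ‖a‖ ≠ 1 := fun a ha => hs a (Multiset.mem_cons_of_mem ha)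
    simp only [Multiset.map_cons, Multiset.sum_cons]
    exact (cont_single r hr).add (ih hs')

lemma intMS (s : Multiset ℂ) (hs : ∀ r ∈ s, ‖r‖ ≠ 1) :
    ∫ t in (0:ℝ)..1, (s.map fun r => ee t * (ee t - r)⁻¹).sum =
      (((s.filter fun r => ‖r‖ < 1).card : ℕ) : ℂ) := by
  revert hs
  refine Multiset.induction_on s ?_ ?_
  · intro _; simp
  · intro r s ih hs
    have hr := hs r (Multiset.mem_cons_self r s)
    have hs' : ∀ a ∈ s, ‖a‖ ≠ 1 := fun a ha => hs a (Multiset.mem_cons_of_mem ha)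
    simp only [Multiset.map_cons, Multiset.sum_cons]
    rw [intervalIntegral.integral_add ((cont_single r hr).intervalIntegrable 0 1)
      ((contMS s hs').intervalIntegrable 0 1), winding r hr, ih hs', Multiset.filter_cons]
    by_cases h : ‖r‖ < 1 <;> simp [h] <;> push_cast <;> ring

lemma count_formula (Q : Polynomial ℂ) (hQ : ∀ z : ℂ, ‖z‖ = 1 → Q.eval z ≠ 0) :
    ∫ t in (0:ℝ)..1, ee t * (Polynomial.derivative Q).eval (ee t) / Q.eval (ee t) =
      (((Q.roots.filter fun z => ‖z‖ < 1).card : ℕ) : ℂ) := by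
  have hQ0 : Q ≠ 0 := fun h => hQ 1 (by simp) (by simp [h])
  have hroots : ∀ r ∈ Q.roots, ‖r‖ ≠ 1 := by
    intro r hrt habs
    have : Q.eval r = 0 := (Polynomial.mem_roots hQ0).mp hrt
    exact hQ r habs this
  have hcong : ∀ t ∈ Set.uIcc (0:ℝ) 1,
      ee t * (Polynomial.derivative Q).eval (ee t) / Q.eval (ee t)
        = ((Q.roots.map fun rr => ee t * (ee t - rr)⁻¹)).sum := by
    intro t _
    have hev : Q.eval (ee t) ≠ 0 := hQ (ee t) (ee_abs t)
    rw [logderiv_eval Q (ee t) hev, Multiset.sum_map_mul_left]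
    field_simp
  rw [intervalIntegral.integral_congr hcong, intMS Q.roots hroots]

lemma hperN_of (f : ℝ → ℝ → ℂ) (hper : ∀ t s : ℝ, f t (s + 1) = f t s) :
    ∀ (t s : ℝ) (j : ℕ), f t (s + j) = f t s := by
  intro t s j
  induction j with
  | zero => simp
  | succ k ih =>
      have h1 : (s + (k + 1 : ℕ) : ℝ) = (s + k) + 1 := by push_cast; ring
      rw [h1, hper, ih]

lemma riemann_step (f : ℝ → ℝ → ℂ) (hf : Continuous fun p : ℝ × ℝ => f p.1 p.2)
    (hper : ∀ t s : ℝ, f t (s + 1) = f t s) (n : ℕ) (hn : 1 ≤ n) :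
    ∫ t in (0:ℝ)..1, f t (n * t)
      = ∫ u in (0:ℝ)..1, ∑ j ∈ Finset.range n, (n:ℝ)⁻¹ • f ((u + j) / n) u := by
  have hn0 : (n:ℝ) ≠ 0 := Nat.cast_ne_zero.mpr (by omega)
  have hc1 : Continuous fun t : ℝ => f t ((n:ℝ) * t) :=
    hf.comp (continuous_id.prodMk (continuous_const.mul continuous_id))
  have hc2 : ∀ j : ℕ, Continuous fun u : ℝ => f ((u + j) / n) u :=
    fun j => hf.comp (Continuous.prodMk (by continuity) continuous_id)
  have hadj := intervalIntegral.sum_integral_adjacent_intervals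
    (a := fun k : ℕ => (k:ℝ)/n) (μ := by volume_tac) (f := fun t => f t (n * t))
    (n := n) (fun k _ => (hc1.intervalIntegrable _ _))
  beta_reduce at hadj
  rw [show ((0:ℕ):ℝ)/n = 0 by simp, div_self hn0] at hadj
  rw [← hadj]
  rw [intervalIntegral.integral_finset_sum (f := fun (j : ℕ) (u : ℝ) => (n:ℝ)⁻¹ • f ((u + j) / n) u)
    (fun (j : ℕ) _ => (((hc2 j).const_smul ((n:ℝ)⁻¹)).intervalIntegrable _ _ :
      IntervalIntegrable (fun u : ℝ => (n:ℝ)⁻¹ • f ((u + j) / n) u) volume 0 1))]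
  refine Finset.sum_congr rfl fun j hj => ?_
  have hsub := intervalIntegral.integral_comp_div_add (a := (0:ℝ)) (b := 1)
    (fun t => f t (n * t)) hn0 ((j:ℝ)/n)
  rw [show (0:ℝ)/n + (j:ℝ)/n = (j:ℝ)/n by rw [zero_div, zero_add],
    show (1:ℝ)/n + (j:ℝ)/n = ((j:ℕ)+1:ℝ)/n by rw [← add_div, add_comm]] at hsub
  have hBA : ∫ t in ((j:ℝ)/n)..(((j:ℕ)+1:ℝ)/n), f t (n * t)
      = (n:ℝ)⁻¹ • ∫ x in (0:ℝ)..1, f (x/n + (j:ℝ)/n) ((n:ℝ) * (x/n + (j:ℝ)/n)) := by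
    calc ∫ t in ((j:ℝ)/n)..(((j:ℕ)+1:ℝ)/n), f t (n * t)
        = (n:ℝ)⁻¹ • ((n:ℝ) • ∫ t in ((j:ℝ)/n)..(((j:ℕ)+1:ℝ)/n), f t (n * t)) :=
          (inv_smul_smul₀ hn0 _).symm
      _ = (n:ℝ)⁻¹ • ∫ x in (0:ℝ)..1, f (x/n + (j:ℝ)/n) ((n:ℝ) * (x/n + (j:ℝ)/n)) := by
          rw [← hsub]
  have hcast : ((j:ℕ)+1:ℝ)/n = ((j+1:ℕ):ℝ)/n := by push_cast; ring
  rw [← hcast, hBA]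
  rw [intervalIntegral.integral_smul]
  congr 1
  refine intervalIntegral.integral_congr fun x _ => ?_
  have harg : (n:ℝ) * (x/n + (j:ℝ)/n) = x + (j:ℕ) := by field_simp
  rw [harg, hperN_of f hper, ← add_div]

lemma riemann_close (f : ℝ → ℝ → ℂ) (hf : Continuous fun p : ℝ × ℝ => f p.1 p.2)
    {ε δ : ℝ} (hδ0 : 0 < δ)
    (hδ : ∀ p ∈ (Set.Icc (0:ℝ) 1) ×ˢ (Set.Icc (0:ℝ) 1),
      ∀ q ∈ (Set.Icc (0:ℝ) 1) ×ˢ (Set.Icc (0:ℝ) 1),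
      dist p q < δ → dist (f p.1 p.2) (f q.1 q.2) < ε)
    (n : ℕ) (hn : 1 ≤ n) (hnδ : 1/(n:ℝ) < δ)
    (u : ℝ) (hu : u ∈ Set.Icc (0:ℝ) 1) :
    ‖(∑ j ∈ Finset.range n, (n:ℝ)⁻¹ • f ((u + j)/n) u) - ∫ t in (0:ℝ)..1, f t u‖ ≤ ε := by
  have hn0 : (n:ℝ) ≠ 0 := Nat.cast_ne_zero.mpr (by omega)
  have hnpos : (0:ℝ) < n := Nat.cast_pos.mpr (by omega)
  have hcu : Continuous fun t : ℝ => f t u :=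
    hf.comp (continuous_id.prodMk continuous_const)
  have hadj := intervalIntegral.sum_integral_adjacent_intervals
    (a := fun k : ℕ => (k:ℝ)/n) (μ := by volume_tac) (f := fun t => f t u) (n := n)
    (fun k _ => (hcu.intervalIntegrable _ _))
  beta_reduce at hadj
  rw [show ((0:ℕ):ℝ)/n = 0 by simp, div_self hn0] at hadj
  rw [← hadj, ← Finset.sum_sub_distrib]
  refine le_trans (norm_sum_le _ _) ?_
  have hterm : ∀ j ∈ Finset.range n,
      ‖(n:ℝ)⁻¹ • f ((u + j)/n) u - ∫ t in ((j:ℝ)/n)..(((j+1:ℕ):ℝ)/n), f t u‖ ≤ ε * (1/n) := by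
    intro j hj
    have hjn : j < n := Finset.mem_range.mp hj
    have hj1 : (j:ℝ) + 1 ≤ (n:ℝ) := by
      have : (j + 1 : ℕ) ≤ n := hjn
      exact_mod_cast Nat.cast_le.mpr this
    have hlen : ((j+1:ℕ):ℝ)/n - (j:ℝ)/n = 1/n := by
      push_cast
      field_simp
      ring
    have hab : (j:ℝ)/n ≤ ((j+1:ℕ):ℝ)/n := by
      refine (div_le_div_iff_of_pos_right hnpos).mpr ?_
      push_cast
      linarith
    have hconst : (n:ℝ)⁻¹ • f ((u + j)/n) u
        = ∫ _ in ((j:ℝ)/n)..(((j+1:ℕ):ℝ)/n), f ((u + j)/n) u := by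
      rw [intervalIntegral.integral_const, hlen, one_div]
    rw [hconst, ← intervalIntegral.integral_sub (intervalIntegrable_const)
      (hcu.intervalIntegrable _ _)]
    refine le_trans (intervalIntegral.norm_integral_le_of_norm_le_const (C := ε) ?_) ?_
    · intro t ht
      rw [Set.uIoc_of_le hab] at ht
      obtain ⟨ht1, ht2⟩ := ht
      have hj0 : (0:ℝ) ≤ (j:ℝ)/n := by positivity
      have htmem : t ∈ Set.Icc (0:ℝ) 1 := by
        constructor
        · linarith
        · refine le_trans ht2 ?_
          rw [div_le_one hnpos]
          push_cast
          linarith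
      have hpt : (u + (j:ℝ))/n ∈ Set.Icc (0:ℝ) 1 := by
        constructor
        · apply div_nonneg _ (le_of_lt hnpos)
          have := hu.1
          positivity
        · rw [div_le_one hnpos]
          have := hu.2
          linarith
      have h1 : (j:ℝ)/n ≤ (u + j)/n :=
        (div_le_div_iff_of_pos_right hnpos).mpr (by linarith [hu.1])
      have h2 : (u + (j:ℝ))/n ≤ ((j+1:ℕ):ℝ)/n := by
        refine (div_le_div_iff_of_pos_right hnpos).mpr ?_
        push_cast
        linarith [hu.2]
      have habs : |(u + (j:ℝ))/n - t| ≤ 1/n := by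
        rw [abs_sub_le_iff]
        constructor
        · have := hlen
          linarith
        · have := hlen
          linarith
      have hdist : dist (((u + (j:ℝ))/n, u) : ℝ × ℝ) ((t, u) : ℝ × ℝ) < δ := by
        rw [Prod.dist_eq]
        have hd2 : dist u u = 0 := dist_self u
        rw [hd2, max_eq_left dist_nonneg, Real.dist_eq]
        exact lt_of_le_of_lt habs hnδ
      have := hδ _ ⟨hpt, hu⟩ _ ⟨htmem, hu⟩ hdist
      rw [dist_eq_norm] at this
      exact le_of_lt this
    · rw [hlen, _root_.abs_of_nonneg (show (0:ℝ) ≤ 1/(n:ℝ) by positivity)]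
  refine le_trans (Finset.sum_le_sum hterm) ?_
  rw [Finset.sum_const, Finset.card_range, nsmul_eq_mul]
  have hfin : (n:ℝ) * (ε * (1/n)) = ε := by field_simp
  rw [hfin]

lemma equidist (f : ℝ → ℝ → ℂ) (hf : Continuous fun p : ℝ × ℝ => f p.1 p.2)
    (hper : ∀ t s : ℝ, f t (s + 1) = f t s) :
    Tendsto (fun n : ℕ => ∫ t in (0:ℝ)..1, f t (n * t)) atTop
      (nhds (∫ s in (0:ℝ)..1, ∫ t in (0:ℝ)..1, f t s)) := by
  have hinner : Continuous fun u : ℝ => ∫ t in (0:ℝ)..1, f t u :=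
    intervalIntegral.continuous_parametric_intervalIntegral_of_continuous'
      (f := fun u t => f t u) (hf.comp continuous_swap) 0 1
  rw [Metric.tendsto_atTop]
  intro ε hε
  obtain ⟨δ, hδ0, hδ⟩ := Metric.uniformContinuousOn_iff.mp
    (((isCompact_Icc : IsCompact (Set.Icc (0:ℝ) 1)).prod
        (isCompact_Icc : IsCompact (Set.Icc (0:ℝ) 1))).uniformContinuousOn_of_continuous
      hf.continuousOn)
    (ε/2) (by positivity)
  obtain ⟨N, hN⟩ := exists_nat_gt (1/δ)
  refine ⟨max N 1, fun n hn => ?_⟩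
  have hn1 : 1 ≤ n := le_trans (le_max_right N 1) hn
  have hnpos : (0:ℝ) < n := Nat.cast_pos.mpr (by omega)
  have hnδ : 1/(n:ℝ) < δ := by
    have hNn : (N:ℝ) ≤ n := Nat.cast_le.mpr (le_trans (le_max_left N 1) hn)
    have h1 : 1/δ < (n:ℝ) := lt_of_lt_of_le hN hNn
    have h2 : 1 < (n:ℝ) * δ := (div_lt_iff₀ hδ0).mp h1
    rw [div_lt_iff₀ hnpos]
    linarith
  rw [riemann_step f hf hper n hn1, dist_eq_norm]
  have hintS : IntervalIntegrable
      (fun u => ∑ j ∈ Finset.range n, (n:ℝ)⁻¹ • f ((u + j)/n) u) volume 0 1 := by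
    apply Continuous.intervalIntegrable
    exact continuous_finset_sum _ fun j _ =>
      ((hf.comp (Continuous.prodMk (by continuity : Continuous fun u : ℝ => (u + (j:ℝ))/n)
        continuous_id) : Continuous fun u : ℝ => f ((u + j)/n) u).const_smul ((n:ℝ)⁻¹))
  rw [← intervalIntegral.integral_sub hintS (hinner.intervalIntegrable _ _)]
  have hb := intervalIntegral.norm_integral_le_of_norm_le_const (C := ε/2)
    (f := fun u => (∑ j ∈ Finset.range n, (n:ℝ)⁻¹ • f ((u + j)/n) u) - ∫ t in (0:ℝ)..1, f t u)
    (a := 0) (b := 1) ?_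
  · refine lt_of_le_of_lt hb ?_
    rw [show |(1:ℝ) - 0| = 1 by norm_num, mul_one]
    linarith
  · intro u hu
    have hu' : u ∈ Set.Icc (0:ℝ) 1 := by
      rw [Set.uIoc_of_le (by norm_num : (0:ℝ) ≤ 1)] at hu
      exact ⟨le_of_lt hu.1, hu.2⟩
    exact riemann_close f hf hδ0 (fun p hp q hq hd => hδ p hp q hq hd) n hn1 hnδ u hu'

noncomputable def Ff (P : Polynomial (Polynomial ℂ)) : ℝ → ℝ → ℂ := fun t s =>
  (tev (Polynomial.derivative P) (ee t) (ee s) * ee s) / tev P (ee t) (ee s)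

noncomputable def Ff1 (P : Polynomial (Polynomial ℂ)) : ℝ → ℝ → ℂ := fun t s =>
  (ee t * tev (Pd P) (ee t) (ee s)) / tev P (ee t) (ee s)

section FfFacts

variable {P : Polynomial (Polynomial ℂ)}
  (hP : ∀ z w : ℂ, ‖z‖ = 1 → ‖w‖ = 1 →
    Polynomial.eval₂ (Polynomial.evalRingHom z) w P ≠ 0)

include hP

lemma tev_ne_zero (t s : ℝ) : tev P (ee t) (ee s) ≠ 0 := hP _ _ (ee_abs t) (ee_abs s)

lemma Ff_continuous : Continuous fun p : ℝ × ℝ => Ff P p.1 p.2 := by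
  have hEE : Continuous fun p : ℝ × ℝ => ((ee p.1, ee p.2) : ℂ × ℂ) :=
    (ee_continuous.comp continuous_fst).prodMk (ee_continuous.comp continuous_snd)
  exact Continuous.div
    (((tev_continuous (Polynomial.derivative P)).comp hEE).mul
      (ee_continuous.comp continuous_snd))
    ((tev_continuous P).comp hEE)
    (fun p => tev_ne_zero hP p.1 p.2)

lemma Ff1_continuous : Continuous fun p : ℝ × ℝ => Ff1 P p.1 p.2 := by
  have hEE : Continuous fun p : ℝ × ℝ => ((ee p.1, ee p.2) : ℂ × ℂ) :=
    (ee_continuous.comp continuous_fst).prodMk (ee_continuous.comp continuous_snd)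
  exact Continuous.div
    ((ee_continuous.comp continuous_fst).mul (((tev_continuous (Pd P)).comp hEE)))
    ((tev_continuous P).comp hEE)
    (fun p => tev_ne_zero hP p.1 p.2)

end FfFacts

lemma Ff_periodic (P : Polynomial (Polynomial ℂ)) (t s : ℝ) : Ff P t (s + 1) = Ff P t s := by
  unfold Ff; rw [ee_add_one]

lemma Ff1_periodic (P : Polynomial (Polynomial ℂ)) (t s : ℝ) : Ff1 P t (s + 1) = Ff1 P t s := by
  unfold Ff1; rw [ee_add_one]

lemma seq1_lim (dstar g : ℕ) (hg : 1 ≤ g) :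
    Tendsto (fun n : ℕ => (((dstar + n * g : ℕ) : ℂ))⁻¹) atTop (nhds 0) := by
  have ha : Tendsto (fun n : ℕ => ((dstar + n * g : ℕ) : ℝ)) atTop atTop := by
    refine tendsto_atTop_mono (fun n => ?_) tendsto_natCast_atTop_atTop
    exact_mod_cast Nat.cast_le.mpr (le_add_left (Nat.le_mul_of_pos_right n (by omega)))
  have hra : Tendsto (fun n : ℕ => (((dstar + n * g : ℕ) : ℝ))⁻¹) atTop (nhds 0) :=
    ha.inv_tendsto_atTop
  have := (Complex.continuous_ofReal.tendsto (0:ℝ)).comp hra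
  refine Tendsto.congr (fun n => ?_) (by simpa using this)
  simp [Function.comp]

lemma seq2_lim (dstar g : ℕ) (hg : 1 ≤ g) :
    Tendsto (fun n : ℕ => (n : ℂ) * (((dstar + n * g : ℕ) : ℂ))⁻¹) atTop
      (nhds (1 / (g : ℂ))) := by
  have hb1 : Tendsto (fun n : ℕ => (dstar : ℝ)/n + g) atTop (nhds ((0:ℝ) + g)) :=
    (tendsto_const_div_atTop_nhds_zero_nat (dstar : ℝ)).add_const _
  rw [zero_add] at hb1
  have hg0 : ((g:ℕ):ℝ) ≠ 0 := Nat.cast_ne_zero.mpr (by omega)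
  have hb2 : Tendsto (fun n : ℕ => ((dstar : ℝ)/n + g)⁻¹) atTop (nhds ((g:ℝ))⁻¹) :=
    hb1.inv₀ hg0
  have hbr : Tendsto (fun n : ℕ => (n:ℝ) * (((dstar + n * g : ℕ) : ℝ))⁻¹) atTop
      (nhds ((g:ℝ))⁻¹) := by
    refine Tendsto.congr' ?_ hb2
    filter_upwards [eventually_ge_atTop 1] with n hn
    have hn0 : (n:ℝ) ≠ 0 := Nat.cast_ne_zero.mpr (by omega)
    have hval : ((dstar + n * g : ℕ) : ℝ) = dstar + n * g := by push_cast; ring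
    rw [hval]
    rw [show (dstar:ℝ)/n + g = (dstar + n * g)/n by field_simp]
    rw [inv_div, div_eq_mul_inv]
  have := (Complex.continuous_ofReal.tendsto ((g:ℝ))⁻¹).comp hbr
  refine Tendsto.congr (fun n => ?_) (by simpa using this)
  simp [Function.comp]

lemma key_identity (P : Polynomial (Polynomial ℂ)) (hg : 1 ≤ P.natDegree)
    (hP : ∀ z w : ℂ, ‖z‖ = 1 → ‖w‖ = 1 →
      Polynomial.eval₂ (Polynomial.evalRingHom z) w P ≠ 0)
    (n : ℕ) (hn : 1 ≤ n) :
    ((((P.eval (Polynomial.X ^ n : Polynomial ℂ)).roots.filter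
        fun z => ‖z‖ < 1).card : ℕ) : ℂ)
      = (∫ t in (0:ℝ)..1, Ff1 P t (n * t)) + (n:ℂ) * ∫ t in (0:ℝ)..1, Ff P t (n * t) := by
  have hQcirc : ∀ z : ℂ, ‖z‖ = 1 →
      (P.eval (Polynomial.X ^ n : Polynomial ℂ)).eval z ≠ 0 := by
    intro z hz
    rw [eval_eval_pow]
    exact hP z (z ^ n) hz (by rw [norm_pow, hz, one_pow])
  rw [← count_formula _ hQcirc]
  have hint1 : IntervalIntegrable (fun t : ℝ => Ff1 P t (n * t)) volume 0 1 :=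
    ((Ff1_continuous hP).comp
      (continuous_id.prodMk (continuous_const.mul continuous_id))).intervalIntegrable _ _
  have hint2 : IntervalIntegrable (fun t : ℝ => (n:ℂ) * Ff P t (n * t)) volume 0 1 :=
    (continuous_const.mul ((Ff_continuous hP).comp
      (continuous_id.prodMk (continuous_const.mul continuous_id)))).intervalIntegrable _ _
  rw [← intervalIntegral.integral_const_mul, ← intervalIntegral.integral_add hint1 hint2]
  refine intervalIntegral.integral_congr fun t _ => ?_
  have hpow : ee t * (ee t) ^ (n - 1) = (ee t) ^ n := by
    conv_rhs => rw [show n = n - 1 + 1 by omega]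
    rw [pow_succ]
    ring
  have hd : tev P (ee t) ((ee t) ^ n) ≠ 0 := by
    rw [← ee_nat_mul]
    exact tev_ne_zero hP t ((n:ℝ) * t)
  rw [deriv_eval_pow P n hn, Polynomial.eval_add, Polynomial.eval_mul, Polynomial.eval_mul,
    Polynomial.eval_C, Polynomial.eval_pow, Polynomial.eval_X, eval_eval_pow, eval_eval_pow,
    eval_eval_pow]
  simp only [Ff, Ff1, ee_nat_mul]
  have hnum : ee t * (tev (Pd P) (ee t) ((ee t) ^ n)
        + (n:ℂ) * (ee t) ^ (n - 1) * tev (Polynomial.derivative P) (ee t) ((ee t) ^ n))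
      = ee t * tev (Pd P) (ee t) ((ee t) ^ n)
        + (n:ℂ) * (tev (Polynomial.derivative P) (ee t) ((ee t) ^ n) * (ee t) ^ n) := by
    rw [← hpow]
    ring
  rw [hnum, add_div, mul_div_assoc]
  ring

theorem boyd_lawton_for_alternative_measure
    (P : Polynomial (Polynomial ℂ)) (hg : 1 ≤ P.natDegree)
    (hP : ∀ z w : ℂ, ‖z‖ = 1 → ‖w‖ = 1 →
      Polynomial.eval₂ (Polynomial.evalRingHom z) w P ≠ 0) :
    Tendsto
      (fun n : ℕ =>
        (((((P.eval (Polynomial.X ^ n : Polynomial ℂ)).roots.filter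
              fun z => ‖z‖ < 1).card : ℝ)
            / (P.eval (Polynomial.X ^ n : Polynomial ℂ)).natDegree : ℝ) : ℂ))
      atTop
      (nhds ((1 / (P.natDegree : ℂ)) *
        ∫ s in (0:ℝ)..1, ∫ t in (0:ℝ)..1,
          (Polynomial.eval₂ (Polynomial.evalRingHom (Complex.exp (2 * π * Complex.I * t)))
              (Complex.exp (2 * π * Complex.I * s)) (Polynomial.derivative P) *
            Complex.exp (2 * π * Complex.I * s)) /
          Polynomial.eval₂ (Polynomial.evalRingHom (Complex.exp (2 * π * Complex.I * t)))
              (Complex.exp (2 * π * Complex.I * s)) P)) := by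
  classical
  have hP0 : P ≠ 0 := by
    intro h
    rw [h] at hg
    simp at hg
  have hI2 := equidist (Ff P) (Ff_continuous hP) (Ff_periodic P)
  have hI1 := equidist (Ff1 P) (Ff1_continuous hP) (Ff1_periodic P)
  have h1 := seq1_lim P.leadingCoeff.natDegree P.natDegree hg
  have h2 := seq2_lim P.leadingCoeff.natDegree P.natDegree hg
  have hmain := (h1.mul hI1).add (h2.mul hI2)
  rw [zero_mul, zero_add] at hmain
  have hnhds : (1 / (P.natDegree : ℂ)) *
      ∫ s in (0:ℝ)..1, ∫ t in (0:ℝ)..1,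
        (Polynomial.eval₂ (Polynomial.evalRingHom (Complex.exp (2 * π * Complex.I * t)))
            (Complex.exp (2 * π * Complex.I * s)) (Polynomial.derivative P) *
          Complex.exp (2 * π * Complex.I * s)) /
        Polynomial.eval₂ (Polynomial.evalRingHom (Complex.exp (2 * π * Complex.I * t)))
            (Complex.exp (2 * π * Complex.I * s)) P
      = (1 / (P.natDegree : ℂ)) * ∫ s in (0:ℝ)..1, ∫ t in (0:ℝ)..1, Ff P t s := rfl
  rw [hnhds]
  refine Tendsto.congr' ?_ hmain
  filter_upwards [eventually_gt_atTop
    ((Finset.range (P.natDegree + 1)).sup (fun i => (P.coeff i).natDegree))] with n hn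
  have hn1 : 1 ≤ n := by omega
  have hdeg := natDeg_eval_pow P hP0 hg n hn
  have hkey := key_identity P hg hP n hn1
  rw [hdeg]
  push_cast
  rw [hkey]
  ring
end

section
/- Let a ∈ ℂ with 0 < |a| ≤ 2. Then the Lebesgue measure of the set {s ∈ [0,1] : |e^{2πis} + a| < 1} equals arccos(|a|/2)/π. -/
open Real Complex MeasureTheory

private lemma vol_inter_Icc_eq_Ioc (S : Set ℝ) (a b : ℝ) :
    volume (S ∩ Set.Icc a b) = volume (S ∩ Set.Ioc a b) := by
  apply le_antisymm
  · have hsub : S ∩ Set.Icc a b ⊆ (S ∩ Set.Ioc a b) ∪ {a} := by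
      rintro x ⟨hxS, hx1, hx2⟩
      rcases eq_or_lt_of_le hx1 with h | h
      · exact Or.inr (by simp [h.symm])
      · exact Or.inl ⟨hxS, h, hx2⟩
    calc volume (S ∩ Set.Icc a b) ≤ volume ((S ∩ Set.Ioc a b) ∪ {a}) := measure_mono hsub
      _ ≤ volume (S ∩ Set.Ioc a b) + volume ({a} : Set ℝ) := measure_union_le _ _
      _ = volume (S ∩ Set.Ioc a b) := by simp
  · exact measure_mono (Set.inter_subset_inter_right _ Set.Ioc_subset_Icc_self)

private lemma vol_inter_Ioc_periodic (S : Set ℝ) (hS : MeasurableSet S)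
    (hper : ∀ x : ℝ, x + 1 ∈ S ↔ x ∈ S) (t : ℝ) (ht : -1 < t) (ht0 : t ≤ 0) :
    volume (S ∩ Set.Ioc t (t + 1)) = volume (S ∩ Set.Ioc 0 1) := by
  have h1 : S ∩ Set.Ioc t (t + 1) = (S ∩ Set.Ioc t 0) ∪ (S ∩ Set.Ioc 0 (t + 1)) := by
    rw [← Set.inter_union_distrib_left, Set.Ioc_union_Ioc_eq_Ioc ht0 (by linarith)]
  have h2 : S ∩ Set.Ioc 0 1 = (S ∩ Set.Ioc 0 (t + 1)) ∪ (S ∩ Set.Ioc (t + 1) 1) := by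
    rw [← Set.inter_union_distrib_left, Set.Ioc_union_Ioc_eq_Ioc (by linarith) (by linarith)]
  have hmemS : ∀ x : ℝ, -1 + x ∈ S ↔ x ∈ S := by
    intro x
    have h := hper (-1 + x)
    rw [show (-1 + x) + 1 = x by ring] at h
    exact h.symm
  have hshift : volume (S ∩ Set.Ioc t 0) = volume (S ∩ Set.Ioc (t + 1) 1) := by
    have hpre : (fun x : ℝ => (-1 : ℝ) + x) ⁻¹' (S ∩ Set.Ioc t 0) = S ∩ Set.Ioc (t + 1) 1 := by
      ext x
      simp only [Set.mem_preimage, Set.mem_inter_iff, Set.mem_Ioc, hmemS x]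
      constructor
      · rintro ⟨hxS, hx1, hx2⟩
        exact ⟨hxS, by linarith, by linarith⟩
      · rintro ⟨hxS, hx1, hx2⟩
        exact ⟨hxS, by linarith, by linarith⟩
    rw [← hpre, measure_preimage_add]
  have hd1 : Disjoint (S ∩ Set.Ioc t 0) (S ∩ Set.Ioc 0 (t + 1)) := by
    apply Set.disjoint_left.2
    rintro x ⟨_, _, hx0⟩ ⟨_, hx0', _⟩
    linarith
  have hd2 : Disjoint (S ∩ Set.Ioc 0 (t + 1)) (S ∩ Set.Ioc (t + 1) 1) := by
    apply Set.disjoint_left.2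
    rintro x ⟨_, _, hx0⟩ ⟨_, hx0', _⟩
    linarith
  rw [h1, h2, measure_union hd1 (hS.inter measurableSet_Ioc),
    measure_union hd2 (hS.inter measurableSet_Ioc), hshift]
  ring

theorem measure_exp_add_a_in_unit_disc (a : ℂ) (h0 : 0 < ‖a‖)
    (h2 : ‖a‖ ≤ 2) :
    volume {s : ℝ | s ∈ Set.Icc (0:ℝ) 1 ∧
        ‖Complex.exp (2 * π * Complex.I * s) + a‖ < 1}
      = ENNReal.ofReal (Real.arccos (‖a‖ / 2) / π) := by
  have hπ : (0 : ℝ) < π := Real.pi_pos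
  set r : ℝ := ‖a‖ with hr
  set θ : ℝ := a.arg with hθ
  set c : ℝ := -(r / 2) with hc
  have hc1 : -1 ≤ c := by rw [hc]; linarith
  have hc0 : c < 0 := by rw [hc]; linarith
  set φ : ℝ := Real.arccos c with hφ
  have hφπ : φ ≤ π := Real.arccos_le_pi c
  have hφ0 : 0 < φ := Real.arccos_pos.2 (by linarith)
  have hcosφ : Real.cos φ = c := Real.cos_arccos hc1 (by linarith)
  set β : ℝ := Int.fract (θ / (2 * π)) with hβ
  have hβ0 : 0 ≤ β := Int.fract_nonneg _
  have hβ1 : β < 1 := Int.fract_lt_one _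
  -- pointwise equivalence
  have hpt : ∀ s : ℝ, ‖Complex.exp (2 * π * Complex.I * s) + a‖ < 1 ↔
      Real.cos (2 * π * (s - β)) < c := by
    intro s
    have hz : Complex.exp (2 * π * Complex.I * s) = Complex.exp ((2 * π * s : ℝ) * Complex.I) := by
      push_cast; ring_nf
    have habs : ‖Complex.exp ((2 * π * s : ℝ) * Complex.I)‖ = 1 :=
      Complex.norm_exp_ofReal_mul_I _
    have hre : (Complex.exp ((2 * π * s : ℝ) * Complex.I) * (starRingEnd ℂ) a).re
        = r * Real.cos (2 * π * s - θ) := by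
      conv_lhs => rw [← Complex.norm_mul_exp_arg_mul_I a]
      rw [map_mul, ← Complex.exp_conj]
      have hconj : (starRingEnd ℂ) ((a.arg : ℂ) * Complex.I) = ((-θ : ℝ) : ℂ) * Complex.I := by
        simp [← hθ]
      have hmul : Complex.exp ((2 * π * s : ℝ) * Complex.I) *
          ((r : ℂ) * Complex.exp (((-θ : ℝ) : ℂ) * Complex.I))
          = (r : ℂ) * Complex.exp (((2 * π * s - θ : ℝ) : ℂ) * Complex.I) := by
        rw [mul_left_comm, ← Complex.exp_add]
        congr 1
        push_cast
        ring_nf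
      rw [hconj, Complex.conj_ofReal, hmul, Complex.re_ofReal_mul,
        Complex.exp_ofReal_mul_I_re]
    have hsq : ‖Complex.exp ((2 * π * s : ℝ) * Complex.I) + a‖ < 1 ↔
        Complex.normSq (Complex.exp ((2 * π * s : ℝ) * Complex.I) + a) < 1 := by
      rw [← Complex.sq_norm]
      constructor
      · intro h; nlinarith [norm_nonneg (Complex.exp ((2 * π * s : ℝ) * Complex.I) + a)]
      · intro h; nlinarith [norm_nonneg (Complex.exp ((2 * π * s : ℝ) * Complex.I) + a)]
    have hcosper : Real.cos (2 * π * (s - β)) = Real.cos (2 * π * s - θ) := by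
      have hbeq : 2 * π * (s - β) = (2 * π * s - θ) + (⌊θ / (2 * π)⌋ : ℤ) * (2 * π) := by
        rw [hβ, Int.fract]
        field_simp
        ring
      rw [hbeq, Real.cos_add_int_mul_two_pi]
    rw [hz, hsq, Complex.normSq_add, hcosper]
    have hnsq1 : Complex.normSq (Complex.exp ((2 * π * s : ℝ) * Complex.I)) = 1 := by
      rw [← Complex.sq_norm, habs]; norm_num
    have hnsq2 : Complex.normSq a = r ^ 2 := by rw [← Complex.sq_norm]
    rw [hnsq1, hnsq2, hre]
    constructor
    · intro h; rw [hc]; nlinarith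
    · intro h; rw [hc] at h; nlinarith
  -- rewrite the set
  set T : Set ℝ := {u : ℝ | Real.cos (2 * π * u) < c} with hT
  have hTmeas : MeasurableSet T := by
    have : T = (fun u : ℝ => Real.cos (2 * π * u)) ⁻¹' Set.Iio c := rfl
    rw [this]
    exact ((Real.continuous_cos.comp (continuous_const.mul continuous_id)).measurable)
      measurableSet_Iio
  have hTper : ∀ x : ℝ, x + 1 ∈ T ↔ x ∈ T := by
    intro x
    have : Real.cos (2 * π * (x + 1)) = Real.cos (2 * π * x) := by
      rw [show 2 * π * (x + 1) = 2 * π * x + 2 * π by ring, Real.cos_add_two_pi]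
    simp only [hT, Set.mem_setOf_eq, this]
  have hset : {s : ℝ | s ∈ Set.Icc (0:ℝ) 1 ∧
      ‖Complex.exp (2 * π * Complex.I * s) + a‖ < 1}
      = (fun s : ℝ => s - β) ⁻¹' T ∩ Set.Icc 0 1 := by
    ext s
    simp only [Set.mem_setOf_eq, Set.mem_inter_iff, Set.mem_preimage, hT, hpt s, and_comm]
  rw [hset]
  -- translate by β
  have htrans : volume ((fun s : ℝ => s - β) ⁻¹' T ∩ Set.Icc 0 1)
      = volume (T ∩ Set.Icc (-β) (-β + 1)) := by
    have hpre : (fun x : ℝ => β + x) ⁻¹' ((fun s : ℝ => s - β) ⁻¹' T ∩ Set.Icc 0 1)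
        = T ∩ Set.Icc (-β) (-β + 1) := by
      ext x
      simp only [Set.mem_preimage, Set.mem_inter_iff, Set.mem_Icc]
      constructor
      · rintro ⟨hxT, hx1, hx2⟩
        rw [show β + x - β = x by ring] at hxT
        exact ⟨hxT, by linarith, by linarith⟩
      · rintro ⟨hxT, hx1, hx2⟩
        rw [show β + x - β = x by ring]
        exact ⟨hxT, by linarith, by linarith⟩
    rw [← hpre, measure_preimage_add]
  rw [htrans, vol_inter_Icc_eq_Ioc,
    vol_inter_Ioc_periodic T hTmeas hTper (-β) (by linarith) (by linarith)]
  -- compute T ∩ Ioc 0 1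
  have hkey : T ∩ Set.Ioc 0 1 = Set.Ioo (φ / (2 * π)) (1 - φ / (2 * π)) := by
    ext u
    simp only [Set.mem_inter_iff, Set.mem_setOf_eq, Set.mem_Ioc, Set.mem_Ioo, hT]
    constructor
    · rintro ⟨hcos, hu0, hu1⟩
      constructor
      · by_contra h
        push_neg at h
        have h1 : 2 * π * u ≤ φ := by
          have := mul_le_mul_of_nonneg_left h (by linarith : (0:ℝ) ≤ 2 * π)
          calc 2 * π * u ≤ 2 * π * (φ / (2 * π)) := this
            _ = φ := by field_simp
        have h2 : Real.cos φ ≤ Real.cos (2 * π * u) :=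
          Real.cos_le_cos_of_nonneg_of_le_pi (by positivity) hφπ h1
        rw [hcosφ] at h2
        linarith
      · by_contra h
        push_neg at h
        have h1 : 2 * π - 2 * π * u ≤ φ := by
          have := mul_le_mul_of_nonneg_left h (by linarith : (0:ℝ) ≤ 2 * π)
          have h' : 2 * π * (1 - φ / (2 * π)) ≤ 2 * π * u := this
          have : 2 * π * (1 - φ / (2 * π)) = 2 * π - φ := by field_simp
          linarith
        have h2 : Real.cos φ ≤ Real.cos (2 * π - 2 * π * u) :=
          Real.cos_le_cos_of_nonneg_of_le_pi (by nlinarith) hφπ h1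
        rw [hcosφ, Real.cos_two_pi_sub] at h2
        linarith
    · rintro ⟨h1, h2⟩
      have hu0 : 0 < u := lt_of_le_of_lt (by positivity) h1
      have hu1 : u ≤ 1 := by
        have : φ / (2 * π) ≥ 0 := by positivity
        linarith
      have hφu : φ < 2 * π * u := by
        have := mul_lt_mul_of_pos_left h1 (by linarith : (0:ℝ) < 2 * π)
        calc φ = 2 * π * (φ / (2 * π)) := by field_simp
          _ < 2 * π * u := this
      have hφu2 : 2 * π * u < 2 * π - φ := by
        have := mul_lt_mul_of_pos_left h2 (by linarith : (0:ℝ) < 2 * π)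
        have heq : 2 * π * (1 - φ / (2 * π)) = 2 * π - φ := by field_simp
        linarith
      refine ⟨?_, hu0, hu1⟩
      rcases le_or_gt (2 * π * u) π with hle | hlt
      · have := Real.strictAntiOn_cos ⟨Real.arccos_nonneg c, hφπ⟩
          ⟨by positivity, hle⟩ hφu
        rw [hcosφ] at this
        exact this
      · have hmem1 : 2 * π - 2 * π * u ∈ Set.Icc 0 π := ⟨by nlinarith, by linarith⟩
        have hφlt : φ < 2 * π - 2 * π * u := by linarith
        have := Real.strictAntiOn_cos ⟨Real.arccos_nonneg c, hφπ⟩ hmem1 hφlt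
        rw [hcosφ, Real.cos_two_pi_sub] at this
        exact this
  rw [hkey, Real.volume_Ioo]
  congr 1
  have harc : φ = π - Real.arccos (r / 2) := by
    rw [hφ, hc, Real.arccos_neg]
  rw [harc]
  field_simp
  ring
end

section
/- Let a ∈ ℂ with 0 < |a| ≤ 2. Then the iterated integral ∫_0^1 ∫_0^1 e^{2πit}/(e^{2πit} + e^{2πis} + a) dt ds equals arccos(|a|/2)/π. In the notation of the paper, c(a + x + y) = arccos(|a|/2)/π. -/
open Real Complex MeasureTheory Set

private lemma exp2pi (t : ℝ) :
    Complex.exp (2 * π * Complex.I * t) = Complex.exp (((2 * π * t : ℝ) : ℂ) * Complex.I) := by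
  congr 1
  push_cast
  ring

private lemma inner_int (b : ℂ) (hb : ‖b‖ ≠ 1) :
    (∫ t in (0:ℝ)..1, Complex.exp (2 * π * Complex.I * t) /
        (Complex.exp (2 * π * Complex.I * t) + b))
      = if ‖b‖ < 1 then 1 else 0 := by
  set g : ℝ → ℂ := fun θ => Complex.exp (θ * Complex.I) / (Complex.exp (θ * Complex.I) + b) with hg
  have key : (∮ z in C(0, 1), (z - (-b))⁻¹)
      = Complex.I * ∫ θ in (0:ℝ)..(2*π), g θ := by
    rw [circleIntegral, ← intervalIntegral.integral_const_mul]
    refine intervalIntegral.integral_congr fun θ _ => ?_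
    simp only [deriv_circleMap, circleMap, smul_eq_mul, sub_neg_eq_add, hg,
      Complex.ofReal_one, one_mul, zero_add, div_eq_mul_inv]
    ring
  have h2 : (∫ t in (0:ℝ)..1, Complex.exp (2 * π * Complex.I * t) /
        (Complex.exp (2 * π * Complex.I * t) + b))
      = (2*π : ℝ)⁻¹ • ∫ θ in (0:ℝ)..(2*π), g θ := by
    have h := intervalIntegral.integral_comp_mul_left (a := (0:ℝ)) (b := 1) g
      (c := 2*π) (by positivity)
    simp only [mul_zero, mul_one] at h
    rw [← h]
    refine intervalIntegral.integral_congr fun t _ => ?_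
    rw [exp2pi]
  rcases lt_or_gt_of_ne hb with h | h
  · have hball : -b ∈ Metric.ball (0:ℂ) 1 := by simpa using h
    rw [circleIntegral.integral_sub_inv_of_mem_ball hball] at key
    have hI : Complex.I ≠ 0 := Complex.I_ne_zero
    have hX : (∫ θ in (0:ℝ)..(2*π), g θ) = 2 * π := by
      apply mul_left_cancel₀ hI
      rw [← key]; ring
    rw [if_pos h, h2, hX, Complex.real_smul]
    push_cast
    exact inv_mul_cancel₀ (mul_ne_zero two_ne_zero (Complex.ofReal_ne_zero.mpr Real.pi_ne_zero))
  · have hzero : (∮ z in C(0, 1), (z - (-b))⁻¹) = 0 := by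
      apply circleIntegral_eq_zero_of_differentiable_on_off_countable zero_le_one
        Set.countable_empty
      · apply ContinuousOn.inv₀ (continuousOn_id.sub continuousOn_const)
        intro z hz
        rw [Pi.sub_apply, sub_ne_zero]
        intro he
        simp only [id_eq] at he
        rw [Metric.mem_closedBall, dist_zero_right] at hz
        rw [he] at hz
        simp only [norm_neg] at hz
        linarith
      · intro z hz
        apply DifferentiableAt.inv (differentiableAt_id.sub_const _)
        rw [sub_ne_zero]
        intro he
        have := Metric.mem_ball.mp hz.1
        rw [dist_zero_right, he] at this
        simp only [norm_neg] at this
        linarith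
    rw [hzero] at key
    have hX : (∫ θ in (0:ℝ)..(2*π), g θ) = 0 := by
      rcases mul_eq_zero.mp key.symm with h' | h'
      · exact absurd h' Complex.I_ne_zero
      · exact h'
    rw [if_neg (by linarith), h2, hX, smul_zero]

private lemma cos_lt_iff_aux {c θ : ℝ} (hc0 : 0 ≤ c) (hcπ : c ≤ π)
    (hθ0 : 0 < θ) (hθ : θ ≤ 2 * π) :
    Real.cos θ < Real.cos c ↔ c < θ ∧ θ < 2 * π - c := by
  constructor
  · intro h
    constructor
    · by_contra hle
      push_neg at hle
      have : Real.cos c ≤ Real.cos θ := by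
        rcases eq_or_lt_of_le hle with he | hlt
        · rw [he]
        · exact le_of_lt (Real.strictAntiOn_cos ⟨hθ0.le, hle.trans hcπ⟩ ⟨hc0, hcπ⟩ hlt)
      linarith
    · by_contra hle
      push_neg at hle
      have h1 : Real.cos (2 * π - θ) = Real.cos θ := Real.cos_two_pi_sub θ
      have h2 : Real.cos c ≤ Real.cos (2 * π - θ) := by
        rcases eq_or_lt_of_le (by linarith : 2 * π - θ ≤ c) with he | hlt
        · rw [he]
        · exact le_of_lt
            (Real.strictAntiOn_cos ⟨by linarith, by linarith⟩ ⟨hc0, hcπ⟩ hlt)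
      linarith
  · rintro ⟨h1, h2⟩
    rcases le_or_gt θ π with hθπ | hθπ
    · exact Real.strictAntiOn_cos ⟨hc0, hcπ⟩ ⟨by linarith, hθπ⟩ h1
    · rw [← Real.cos_two_pi_sub θ]
      exact Real.strictAntiOn_cos ⟨hc0, hcπ⟩ ⟨by linarith, by linarith⟩ (by linarith)

private lemma normSq_aux (r s : ℝ) :
    Complex.normSq (Complex.exp (2 * π * Complex.I * s) + (r : ℂ))
      = 1 + 2 * r * Real.cos (2 * π * s) + r ^ 2 := by
  have h : Complex.exp (2 * π * Complex.I * s) = Complex.exp (((2 * π * s : ℝ) : ℂ) * Complex.I) := by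
    congr 1; push_cast; ring
  rw [h, Complex.normSq_apply]
  simp only [Complex.add_re, Complex.add_im, Complex.exp_ofReal_mul_I_re,
    Complex.exp_ofReal_mul_I_im, Complex.ofReal_re, Complex.ofReal_im, add_zero]
  have := Real.sin_sq_add_cos_sq (2 * π * s)
  nlinarith [this]

private lemma abs_lt_one_iff_cos {r : ℝ} (hr : 0 < r) (s : ℝ) :
    ‖Complex.exp (2 * π * Complex.I * s) + (r : ℂ)‖ < 1
      ↔ Real.cos (2 * π * s) < -(r / 2) := by
  set z := Complex.exp (2 * π * Complex.I * s) + (r : ℂ) with hz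
  have hsq : ‖z‖ ^ 2 = 1 + 2 * r * Real.cos (2 * π * s) + r ^ 2 := by
    rw [Complex.sq_norm, hz, normSq_aux]
  have hnn := norm_nonneg z
  constructor
  · intro h
    nlinarith
  · intro h
    nlinarith

private lemma abs_ne_one_of_cos {r : ℝ} (hr : 0 < r) {s : ℝ}
    (h : Real.cos (2 * π * s) ≠ -(r / 2)) :
    ‖Complex.exp (2 * π * Complex.I * s) + (r : ℂ)‖ ≠ 1 := by
  intro habs
  apply h
  have hsq : (‖Complex.exp (2 * π * Complex.I * s) + (r : ℂ)‖) ^ 2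
      = 1 + 2 * r * Real.cos (2 * π * s) + r ^ 2 := by
    rw [Complex.sq_norm, normSq_aux]
  rw [habs] at hsq
  have h2 : 2 * r * Real.cos (2 * π * s) = 2 * r * (-(r / 2)) := by nlinarith
  exact mul_left_cancel₀ (by positivity) h2

private noncomputable def G (a : ℂ) (σ : ℝ) : ℂ :=
  ∫ t in (0:ℝ)..1, Complex.exp (2 * π * Complex.I * t) /
    (Complex.exp (2 * π * Complex.I * t) + (Complex.exp (2 * π * Complex.I * σ) + a))

private lemma G_periodic (a : ℂ) : Function.Periodic (G a) 1 := by
  intro s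
  unfold G
  have h : Complex.exp (2 * π * Complex.I * ((s : ℂ) + 1)) = Complex.exp (2 * π * Complex.I * s) := by
    rw [mul_add, Complex.exp_add, mul_one, Complex.exp_two_pi_mul_I, mul_one]
  simp only [Complex.ofReal_add, Complex.ofReal_one, h]

private lemma G_eval (a : ℂ) (h0 : 0 < ‖a‖) {s : ℝ}
    (hs : Real.cos (2 * π * s) ≠ -(‖a‖ / 2)) :
    G a (s + a.arg / (2 * π))
      = if Real.cos (2 * π * s) < -(‖a‖ / 2) then 1 else 0 := by
  unfold G
  have hπC : (π : ℂ) ≠ 0 := Complex.ofReal_ne_zero.mpr Real.pi_ne_zero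
  have hfact : Complex.exp (2 * π * Complex.I * ((s + a.arg / (2 * π) : ℝ) : ℂ)) + a
      = Complex.exp ((a.arg : ℂ) * Complex.I) *
        (Complex.exp (2 * π * Complex.I * s) + (‖a‖ : ℂ)) := by
    have e1 : (2 * (π : ℂ) * Complex.I * ((s + a.arg / (2 * π) : ℝ) : ℂ))
        = 2 * π * Complex.I * s + (a.arg : ℂ) * Complex.I := by
      push_cast
      field_simp
    rw [e1, Complex.exp_add]
    linear_combination -Complex.norm_mul_exp_arg_mul_I a
  have habs : ‖
        (Complex.exp (2 * π * Complex.I * ((s + a.arg / (2 * π) : ℝ) : ℂ)) + a)‖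
      = ‖Complex.exp (2 * π * Complex.I * s) + (‖a‖ : ℂ)‖ := by
    rw [hfact, norm_mul, Complex.norm_exp_ofReal_mul_I, one_mul]
  rw [inner_int _ (by rw [habs]; exact abs_ne_one_of_cos h0 hs)]
  simp only [habs, abs_lt_one_iff_cos h0]

theorem c_of_a_add_x_add_y (a : ℂ) (h0 : 0 < ‖a‖)
    (h2 : ‖a‖ ≤ 2) :
    (∫ s in (0:ℝ)..1, ∫ t in (0:ℝ)..1,
        Complex.exp (2 * π * Complex.I * t) /
          (Complex.exp (2 * π * Complex.I * t) +
            Complex.exp (2 * π * Complex.I * s) + a))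
      = ((Real.arccos (‖a‖ / 2) / π : ℝ) : ℂ) := by
  have hπ := Real.pi_pos
  have h2π : (0:ℝ) < 2 * π := by positivity
  have hc : Real.cos (Real.arccos (-(‖a‖ / 2))) = -(‖a‖ / 2) :=
    Real.cos_arccos (by linarith) (by linarith)
  set cc := Real.arccos (-(‖a‖ / 2)) with hcc
  have hc0 : 0 ≤ cc := Real.arccos_nonneg _
  have hcπ : cc ≤ π := Real.arccos_le_pi _
  set u := cc / (2 * π) with hu
  set v := (2 * π - cc) / (2 * π) with hv
  have hu0 : 0 ≤ u := div_nonneg hc0 h2π.le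
  have huv : u ≤ v := by rw [hu, hv]; exact (div_le_div_iff_of_pos_right h2π).mpr (by linarith)
  have hv1 : v ≤ 1 := by rw [hv, div_le_one h2π]; linarith
  have step0 : (∫ s in (0:ℝ)..1, ∫ t in (0:ℝ)..1,
        Complex.exp (2 * π * Complex.I * t) /
          (Complex.exp (2 * π * Complex.I * t) +
            Complex.exp (2 * π * Complex.I * s) + a))
      = ∫ s in (0:ℝ)..1, G a s := by
    refine intervalIntegral.integral_congr fun s _ => ?_
    unfold G
    exact intervalIntegral.integral_congr fun t _ => by rw [add_assoc]
  have hshift : (∫ s in (0:ℝ)..1, G a s)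
      = ∫ s in (0:ℝ)..1, G a (s + a.arg / (2 * π)) := by
    have h1 := (G_periodic a).intervalIntegral_add_eq 0 (a.arg / (2 * π))
    rw [zero_add] at h1
    have h2' : (∫ s in (0:ℝ)..1, G a (s + a.arg / (2 * π)))
        = ∫ s in (a.arg / (2 * π))..(a.arg / (2 * π) + 1), G a s := by
      rw [intervalIntegral.integral_comp_add_right (fun s => G a s) (a.arg / (2 * π))]
      norm_num [add_comm]
    rw [h2', ← h1]
  have hBnull : volume {x : ℝ | Real.cos (2 * π * x) = -(‖a‖ / 2)} = 0 := by
    have hsub : {x : ℝ | Real.cos (2 * π * x) = -(‖a‖ / 2)}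
        ⊆ ⋃ k : ℤ, ({(cc - 2 * k * π) / (2 * π)} ∪ {(2 * k * π - cc) / (2 * π)} : Set ℝ) := by
      intro s hs
      have hcc2 : Real.cos (2 * π * s) = Real.cos cc := by rw [hc]; exact hs
      obtain ⟨k, hk | hk⟩ := Real.cos_eq_cos_iff.mp hcc2
      · refine Set.mem_iUnion.mpr ⟨k, Set.mem_union_left _ ?_⟩
        simp only [Set.mem_singleton_iff]
        rw [eq_div_iff (ne_of_gt h2π)]
        linarith
      · refine Set.mem_iUnion.mpr ⟨k, Set.mem_union_right _ ?_⟩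
        simp only [Set.mem_singleton_iff]
        rw [eq_div_iff (ne_of_gt h2π)]
        linarith
    exact measure_mono_null hsub
      ((Set.countable_iUnion fun k =>
        (Set.countable_singleton _).union (Set.countable_singleton _)).measure_zero _)
  have hae : ∀ᵐ s : ℝ, s ∉ {x : ℝ | Real.cos (2 * π * x) = -(‖a‖ / 2)} :=
    measure_eq_zero_iff_ae_notMem.mp hBnull
  have hcong : (∫ s in (0:ℝ)..1, G a (s + a.arg / (2 * π)))
      = ∫ s in (0:ℝ)..1, Set.indicator (Set.Ioo u v) (fun _ => (1:ℂ)) s := by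
    apply intervalIntegral.integral_congr_ae
    filter_upwards [hae] with s hsB hsI
    rw [Set.uIoc_of_le zero_le_one] at hsI
    have hne : Real.cos (2 * π * s) ≠ -(‖a‖ / 2) := hsB
    rw [G_eval a h0 hne, Set.indicator_apply]
    have hiff : Real.cos (2 * π * s) < -(‖a‖ / 2) ↔ s ∈ Set.Ioo u v := by
      rw [← hc, cos_lt_iff_aux hc0 hcπ (by nlinarith [hsI.1]) (by nlinarith [hsI.2])]
      constructor
      · rintro ⟨ha1, ha2⟩
        exact ⟨(div_lt_iff₀ h2π).mpr (by linarith), (lt_div_iff₀ h2π).mpr (by linarith)⟩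
      · rintro ⟨ha1, ha2⟩
        have hb1 := (div_lt_iff₀ h2π).mp ha1
        have hb2 := (lt_div_iff₀ h2π).mp ha2
        constructor <;> linarith
    rw [if_congr hiff rfl rfl]
  have hind : (∫ s in (0:ℝ)..1, Set.indicator (Set.Ioo u v) (fun _ => (1:ℂ)) s)
      = ((v - u : ℝ) : ℂ) := by
    rw [intervalIntegral.integral_of_le zero_le_one,
      MeasureTheory.setIntegral_indicator measurableSet_Ioo]
    have hsub2 : Set.Ioc (0:ℝ) 1 ∩ Set.Ioo u v = Set.Ioo u v :=
      Set.inter_eq_self_of_subset_right fun x hx =>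
        ⟨lt_of_le_of_lt hu0 hx.1, le_of_lt (lt_of_lt_of_le hx.2 hv1)⟩
    rw [hsub2, MeasureTheory.setIntegral_const, Real.volume_real_Ioo_of_le huv,
      Complex.real_smul, mul_one]
  rw [step0, hshift, hcong, hind]
  have hccπ : cc = π - Real.arccos (‖a‖ / 2) := by
    rw [hcc, Real.arccos_neg]
  have harith : v - u = Real.arccos (‖a‖ / 2) / π := by
    rw [hv, hu, hccπ]
    field_simp
    ring
  exact congrArg Complex.ofReal harith
end

section
/- The iterated integral ∫_0^1 ∫_0^1 e^{2πit}/(e^{2πit} + e^{2πis} + 1) dt ds equals 1/3. In the notation of the paper, c(1 + x + y) = 1/3. -/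
open Real Complex MeasureTheory

lemma cOXY_E_eq (t : ℝ) :
    Complex.exp (2 * π * Complex.I * t) = Complex.exp (((2*π*t : ℝ) : ℂ) * Complex.I) := by
  push_cast; ring_nf

lemma cOXY_abs_E (t : ℝ) : ‖Complex.exp (2 * π * Complex.I * t)‖ = 1 := by
  rw [cOXY_E_eq]; exact Complex.norm_exp_ofReal_mul_I _

lemma cOXY_denom_ne (c : ℂ) (hc : ‖c‖ ≠ 1) (t : ℝ) :
    Complex.exp (2 * π * Complex.I * t) + c ≠ 0 := by
  intro h
  apply hc
  have hcv : c = -Complex.exp (2 * π * Complex.I * t) := by linear_combination h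
  rw [hcv, norm_neg, cOXY_abs_E]

lemma cOXY_slit (w : ℂ) (hw : ‖w‖ < 1) : 1 + w ∈ Complex.slitPlane := by
  rw [Complex.mem_slitPlane_iff]
  left
  have h1 := Complex.abs_re_le_norm w
  have h2 := neg_abs_le w.re
  simp only [Complex.add_re, Complex.one_re]
  linarith

lemma cOXY_cont (c : ℂ) (hc : ‖c‖ ≠ 1) :
    Continuous fun t : ℝ =>
      Complex.exp (2 * π * Complex.I * t) / (Complex.exp (2 * π * Complex.I * t) + c) := by
  apply Continuous.div
  · exact Complex.continuous_exp.comp (by continuity)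
  · exact (Complex.continuous_exp.comp (by continuity)).add continuous_const
  · exact cOXY_denom_ne c hc

lemma cOXY_inner_small (c : ℂ) (hc : ‖c‖ < 1) :
    (∫ t in (0:ℝ)..1,
        Complex.exp (2 * π * Complex.I * t) / (Complex.exp (2 * π * Complex.I * t) + c)) = 1 := by
  have hπ : (2 * (π:ℂ) * Complex.I) ≠ 0 := by
    simp [Real.pi_ne_zero, Complex.I_ne_zero]
  have hd : ∀ t : ℝ, HasDerivAt
      (fun t : ℝ => (t:ℂ) + (2 * π * Complex.I)⁻¹ *
        Complex.log (1 + c * Complex.exp (-(2 * π * Complex.I * t))))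
      (Complex.exp (2 * π * Complex.I * t) / (Complex.exp (2 * π * Complex.I * t) + c)) t := by
    intro t
    have habsw : ‖Complex.exp (-(2 * (π:ℂ) * Complex.I * t))‖ = 1 := by
      have h : -(2 * (π:ℂ) * Complex.I * (t:ℝ)) = ((2*π*(-t) : ℝ) : ℂ) * Complex.I := by
        push_cast; ring
      rw [h, Complex.norm_exp_ofReal_mul_I]
    have habs : ‖c * Complex.exp (-(2 * (π:ℂ) * Complex.I * t))‖ < 1 := by
      rw [norm_mul, habsw, mul_one]; exact hc
    have hslit := cOXY_slit _ habs
    have hne : (1 + c * Complex.exp (-(2 * (π:ℂ) * Complex.I * t))) ≠ 0 :=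
      Complex.slitPlane_ne_zero hslit
    have h1 : HasDerivAt (fun z : ℂ => -(2 * π * Complex.I * z)) (-(2 * π * Complex.I)) (t:ℂ) := by
      simpa [Pi.neg_def] using (HasDerivAt.const_mul (2 * (π:ℂ) * Complex.I) (hasDerivAt_id (t:ℂ))).neg
    have h2 : HasDerivAt (fun z : ℂ => Complex.exp (-(2 * π * Complex.I * z)))
        (Complex.exp (-(2 * π * Complex.I * t)) * -(2 * π * Complex.I)) (t:ℂ) :=
      (Complex.hasDerivAt_exp _).comp _ h1
    have h3 : HasDerivAt (fun z : ℂ => 1 + c * Complex.exp (-(2 * π * Complex.I * z)))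
        (c * (Complex.exp (-(2 * π * Complex.I * t)) * -(2 * π * Complex.I))) (t:ℂ) :=
      (h2.const_mul c).const_add 1
    have h4 : HasDerivAt (fun z : ℂ => Complex.log (1 + c * Complex.exp (-(2 * π * Complex.I * z))))
        ((1 + c * Complex.exp (-(2 * π * Complex.I * (t:ℂ))))⁻¹ *
          (c * (Complex.exp (-(2 * π * Complex.I * t)) * -(2 * π * Complex.I)))) (t:ℂ) :=
      (Complex.hasDerivAt_log hslit).comp_of_eq (t:ℂ) h3 rfl
    have h6 : HasDerivAt (fun y : ℝ => (y:ℂ)) 1 t := (hasDerivAt_id ((t:ℝ):ℂ)).comp_ofReal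
    have h7 := h6.add ((h4.comp_ofReal).const_mul ((2 * (π:ℂ) * Complex.I)⁻¹))
    refine h7.congr_deriv ?_
    have hwinv : Complex.exp (-(2 * (π:ℂ) * Complex.I * t)) =
        (Complex.exp (2 * (π:ℂ) * Complex.I * t))⁻¹ := Complex.exp_neg _
    rw [hwinv] at hne ⊢
    have ha : Complex.exp (2 * (π:ℂ) * Complex.I * t) ≠ 0 := Complex.exp_ne_zero _
    have hden : Complex.exp (2 * (π:ℂ) * Complex.I * t) + c ≠ 0 := cOXY_denom_ne c hc.ne t
    field_simp [hπ, hne, ha, hden]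
    ring
  have hcont := cOXY_cont c hc.ne
  rw [intervalIntegral.integral_eq_sub_of_hasDerivAt (fun x _ => hd x)
      (hcont.intervalIntegrable 0 1)]
  have e1 : -(2 * (π:ℂ) * Complex.I * ((1:ℝ):ℂ)) = -(2 * (π:ℂ) * Complex.I) := by push_cast; ring
  have e0 : -(2 * (π:ℂ) * Complex.I * ((0:ℝ):ℂ)) = -(0:ℂ) := by push_cast; ring
  rw [e1, e0]
  simp [Complex.exp_neg, Complex.exp_two_pi_mul_I]

lemma cOXY_inner_large (c : ℂ) (hc : 1 < ‖c‖) :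
    (∫ t in (0:ℝ)..1,
        Complex.exp (2 * π * Complex.I * t) / (Complex.exp (2 * π * Complex.I * t) + c)) = 0 := by
  have hπ : (2 * (π:ℂ) * Complex.I) ≠ 0 := by
    simp [Real.pi_ne_zero, Complex.I_ne_zero]
  have hc0 : c ≠ 0 := by
    intro h; rw [h] at hc; simp at hc; linarith
  have hd : ∀ t : ℝ, HasDerivAt
      (fun t : ℝ => (2 * (π:ℂ) * Complex.I)⁻¹ *
        Complex.log (1 + c⁻¹ * Complex.exp (2 * π * Complex.I * t)))
      (Complex.exp (2 * π * Complex.I * t) / (Complex.exp (2 * π * Complex.I * t) + c)) t := by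
    intro t
    have habs : ‖c⁻¹ * Complex.exp (2 * (π:ℂ) * Complex.I * t)‖ < 1 := by
      rw [norm_mul, norm_inv, cOXY_abs_E, mul_one]
      rw [inv_lt_one_iff₀]
      right; exact hc
    have hslit := cOXY_slit _ habs
    have hne : (1 + c⁻¹ * Complex.exp (2 * (π:ℂ) * Complex.I * t)) ≠ 0 :=
      Complex.slitPlane_ne_zero hslit
    have h1 : HasDerivAt (fun z : ℂ => 2 * π * Complex.I * z) (2 * π * Complex.I) (t:ℂ) := by
      simpa using HasDerivAt.const_mul (2 * (π:ℂ) * Complex.I) (hasDerivAt_id (t:ℂ))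
    have h2 : HasDerivAt (fun z : ℂ => Complex.exp (2 * π * Complex.I * z))
        (Complex.exp (2 * π * Complex.I * t) * (2 * π * Complex.I)) (t:ℂ) :=
      (Complex.hasDerivAt_exp _).comp _ h1
    have h3 : HasDerivAt (fun z : ℂ => 1 + c⁻¹ * Complex.exp (2 * π * Complex.I * z))
        (c⁻¹ * (Complex.exp (2 * π * Complex.I * t) * (2 * π * Complex.I))) (t:ℂ) :=
      (h2.const_mul c⁻¹).const_add 1
    have h4 : HasDerivAt
        (fun z : ℂ => Complex.log (1 + c⁻¹ * Complex.exp (2 * π * Complex.I * z)))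
        ((1 + c⁻¹ * Complex.exp (2 * π * Complex.I * (t:ℂ)))⁻¹ *
          (c⁻¹ * (Complex.exp (2 * π * Complex.I * t) * (2 * π * Complex.I)))) (t:ℂ) :=
      (Complex.hasDerivAt_log hslit).comp_of_eq (t:ℂ) h3 rfl
    have h7 := (h4.comp_ofReal).const_mul ((2 * (π:ℂ) * Complex.I)⁻¹)
    refine h7.congr_deriv ?_
    have ha : Complex.exp (2 * (π:ℂ) * Complex.I * t) ≠ 0 := Complex.exp_ne_zero _
    have hden : Complex.exp (2 * (π:ℂ) * Complex.I * t) + c ≠ 0 :=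
      cOXY_denom_ne c hc.ne' t
    have hcden : c + Complex.exp (2 * (π:ℂ) * Complex.I * t) ≠ 0 := by
      intro h; apply hden; linear_combination h
    have h9 : (1 + c⁻¹ * Complex.exp (2 * (π:ℂ) * Complex.I * t)) =
        c⁻¹ * (c + Complex.exp (2 * (π:ℂ) * Complex.I * t)) := by
      field_simp
    rw [h9]
    field_simp [hπ, hc0, hden, hcden]
    ring
  have hcont := cOXY_cont c hc.ne'
  rw [intervalIntegral.integral_eq_sub_of_hasDerivAt (fun x _ => hd x)
      (hcont.intervalIntegrable 0 1)]
  have e1 : (2 * (π:ℂ) * Complex.I * ((1:ℝ):ℂ)) = (2 * (π:ℂ) * Complex.I) := by push_cast; ring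
  have e0 : (2 * (π:ℂ) * Complex.I * ((0:ℝ):ℂ)) = (0:ℂ) := by push_cast; ring
  rw [e1, e0]
  simp [Complex.exp_two_pi_mul_I]

lemma cOXY_sq_abs (s : ℝ) :
    (‖Complex.exp (2 * π * Complex.I * s) + 1‖)^2 = 2 + 2 * Real.cos (2*π*s) := by
  have h : Complex.exp (2 * (π:ℂ) * Complex.I * s) + 1 =
      ((Real.cos (2*π*s) + 1 : ℝ) : ℂ) + ((Real.sin (2*π*s) : ℝ) : ℂ) * Complex.I := by
    rw [cOXY_E_eq s, Complex.exp_mul_I, ← Complex.ofReal_cos, ← Complex.ofReal_sin]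
    push_cast; ring
  rw [h, Complex.norm_add_mul_I, Real.sq_sqrt (by positivity)]
  have hpy := Real.sin_sq_add_cos_sq (2*π*s)
  nlinarith [hpy]

lemma cOXY_cos_neg_half : Real.cos (2*π/3) = -(1/2) := by
  have h : 2*π/3 = π - π/3 := by ring
  rw [h, Real.cos_pi_sub, Real.cos_pi_div_three]

lemma cOXY_cos_lt (x : ℝ) (h1 : 2*π/3 < x) (h2 : x ≤ π) : Real.cos x < -(1/2) := by
  have hp := Real.pi_pos
  have := Real.strictAntiOn_cos (a := 2*π/3) (b := x)
    ⟨by positivity, by linarith⟩ ⟨by linarith, h2⟩ h1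
  rw [cOXY_cos_neg_half] at this
  linarith

lemma cOXY_cos_gt (x : ℝ) (h1 : 0 ≤ x) (h2 : x < 2*π/3) : -(1/2) < Real.cos x := by
  have hp := Real.pi_pos
  have := Real.strictAntiOn_cos (a := x) (b := 2*π/3)
    ⟨h1, by linarith⟩ ⟨by positivity, by linarith⟩ h2
  rw [cOXY_cos_neg_half] at this
  linarith

lemma cOXY_cos_sym (s : ℝ) : Real.cos (2*π*(1-s)) = Real.cos (2*π*s) := by
  have h : 2*π*(1-s) = 2*π - 2*π*s := by ring
  rw [h, Real.cos_sub]
  simp [Real.cos_two_pi, Real.sin_two_pi]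

lemma cOXY_cos_small {s : ℝ} (h1 : 1/3 < s) (h2 : s < 2/3) : Real.cos (2*π*s) < -(1/2) := by
  have hp := Real.pi_pos
  rcases le_or_gt s (1/2) with h | h
  · exact cOXY_cos_lt _ (by nlinarith) (by nlinarith)
  · rw [← cOXY_cos_sym]
    exact cOXY_cos_lt _ (by nlinarith) (by nlinarith)

lemma cOXY_cos_big {s : ℝ} (h0 : 0 ≤ s) (h1 : s ≤ 1) (h : s < 1/3 ∨ 2/3 < s) :
    -(1/2) < Real.cos (2*π*s) := by
  have hp := Real.pi_pos
  rcases h with h | h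
  · exact cOXY_cos_gt _ (by positivity) (by nlinarith)
  · rw [← cOXY_cos_sym]
    exact cOXY_cos_gt _ (by nlinarith) (by nlinarith)

theorem c_of_one_add_x_add_y :
    (∫ s in (0:ℝ)..1, ∫ t in (0:ℝ)..1,
        Complex.exp (2 * π * Complex.I * t) /
          (Complex.exp (2 * π * Complex.I * t) +
            Complex.exp (2 * π * Complex.I * s) + 1))
      = 1 / 3 := by
  have key : ∀ᵐ s : ℝ, s ∈ Set.uIoc (0:ℝ) 1 →
      (∫ t in (0:ℝ)..1,
        Complex.exp (2 * π * Complex.I * t) /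
          (Complex.exp (2 * π * Complex.I * t) +
            Complex.exp (2 * π * Complex.I * s) + 1))
        = Set.indicator (Set.Ioo (1/3:ℝ) (2/3)) (fun _ => (1:ℂ)) s := by
    have hnull : (volume : Measure ℝ) ({1/3, 2/3} : Set ℝ) = 0 :=
      Set.Countable.measure_zero (Set.toFinite _).countable _
    filter_upwards [measure_eq_zero_iff_ae_notMem.mp hnull] with s hs hmem
    rw [Set.uIoc_of_le (by norm_num : (0:ℝ) ≤ 1)] at hmem
    have hs13 : s ≠ 1/3 := fun h => hs (by simp [h])
    have hs23 : s ≠ 2/3 := fun h => hs (by simp [h])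
    simp only [add_assoc]
    by_cases hIn : s ∈ Set.Ioo (1/3:ℝ) (2/3)
    · rw [Set.indicator_of_mem hIn]
      apply cOXY_inner_small
      have hcos := cOXY_cos_small hIn.1 hIn.2
      have hsq := cOXY_sq_abs s
      have hnn := norm_nonneg (Complex.exp (2 * (π:ℂ) * Complex.I * s) + 1)
      nlinarith
    · rw [Set.indicator_of_notMem hIn]
      apply cOXY_inner_large
      have hcase : s < 1/3 ∨ 2/3 < s := by
        rcases lt_trichotomy s (1/3 : ℝ) with h | h | h
        · exact Or.inl h
        · exact absurd h hs13
        · right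
          rcases lt_trichotomy s (2/3 : ℝ) with h' | h' | h'
          · exact absurd ⟨h, h'⟩ hIn
          · exact absurd h' hs23
          · exact h'
      have hcos := cOXY_cos_big (le_of_lt hmem.1) hmem.2 hcase
      have hsq := cOXY_sq_abs s
      have hnn := norm_nonneg (Complex.exp (2 * (π:ℂ) * Complex.I * s) + 1)
      nlinarith
  rw [intervalIntegral.integral_congr_ae key]
  rw [intervalIntegral.integral_of_le (by norm_num : (0:ℝ) ≤ 1)]
  rw [MeasureTheory.setIntegral_indicator measurableSet_Ioo]
  have hint : Set.Ioc (0:ℝ) 1 ∩ Set.Ioo (1/3) (2/3) = Set.Ioo (1/3:ℝ) (2/3) := by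
    apply Set.inter_eq_self_of_subset_right
    intro x hx
    exact ⟨by linarith [hx.1], by linarith [hx.2]⟩
  rw [hint, setIntegral_const, Real.volume_real_Ioo_of_le (by norm_num)]
  rw [Complex.real_smul]
  norm_num
end
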